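/- arXiv:1510.03491 — 4 statements merged into one kernel-verified Lean document; each statement's English description precedes it below -/
import Mathlib

section
/- If ψ ∈ H¹(ℝ) satisfies ‖ψ‖²_{L²} < 2, then the energy E(ψ) = (1/2)‖ψ'‖²_{L²} - (1/4)|ψ(0)|⁴ is nonnegative and moreover ‖ψ'‖²_{L²} ≤ 2E(ψ)/(1 - ‖ψ‖²_{L²}/2). -/
open MeasureTheory

def IsH1 (f f' : ℝ → ℂ) : Prop :=
  Continuous f ∧ AEStronglyMeasurable f' volume ∧
  (∀ x : ℝ, f x = f 0 + ∫ t in (0:ℝ)..x, f' t) ∧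
  Integrable (fun x => ‖f x‖ ^ 2) ∧ Integrable (fun x => ‖f' x‖ ^ 2)

open Set Complex

private lemma norm_sq_eq_normSq (z : ℂ) : ‖z‖ ^ 2 = Complex.normSq z := by
  rw [Complex.sq_norm]

private lemma h1_integrableOn {f : ℝ → ℂ}
    (hm : AEStronglyMeasurable f volume) (h2 : Integrable (fun x => ‖f x‖ ^ 2)) {s : Set ℝ}
    (hfin : volume s < ⊤) : IntegrableOn f s volume := by
  refine Integrable.mono' (g := fun x => 1 + ‖f x‖ ^ 2)
    (by exact (integrableOn_const (C := (1:ℝ)) hfin.ne).add h2.restrict) hm.restrict ?_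
  refine Filter.Eventually.of_forall fun x => ?_
  show ‖f x‖ ≤ 1 + ‖f x‖ ^ 2
  nlinarith [norm_nonneg (f x), sq_nonneg (‖f x‖ - 1)]

private lemma h1_intervalIntegrable {f : ℝ → ℂ}
    (hm : AEStronglyMeasurable f volume) (h2 : Integrable (fun x => ‖f x‖ ^ 2)) (a b : ℝ) :
    IntervalIntegrable f volume a b := by
  rw [intervalIntegrable_iff]
  exact h1_integrableOn hm h2 (by rw [Set.uIoc]; exact measure_Ioc_lt_top)

private lemma integrable_conj' {g : ℝ → ℂ} {μ : Measure ℝ} (h : Integrable g μ) :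
    Integrable (fun x => (starRingEnd ℂ) (g x)) μ := by
  refine h.norm.mono' (Complex.continuous_conj.comp_aestronglyMeasurable h.1) ?_
  refine Filter.Eventually.of_forall fun x => ?_
  simp

private lemma cs_aux {M K D : ℝ} (hM : 0 ≤ M) (hK : 0 ≤ K)
    (h : ∀ t : ℝ, 0 ≤ t ^ 2 * M - 2 * t * K + D) : K ^ 2 ≤ M * D := by
  have hD : 0 ≤ D := by simpa using h 0
  rcases eq_or_lt_of_le hM with hM0 | hMpos
  · rcases eq_or_lt_of_le hK with hK0 | hKpos
    · nlinarith
    · exfalso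
      have h2K : (0:ℝ) < 2 * K := by linarith
      have ht : (D + 1) / (2 * K) * (2 * K) = D + 1 := div_mul_cancel₀ _ (ne_of_gt h2K)
      have h3 := h ((D + 1) / (2 * K))
      rw [← hM0] at h3
      nlinarith
  · have h3 := h (K / M)
    have h4 : K / M * M = K := div_mul_cancel₀ _ (ne_of_gt hMpos)
    have h5 := mul_nonneg hMpos.le h3
    nlinarith

private lemma exists_small {g : ℝ → ℝ} (hg : Integrable g volume) (hnn : ∀ x, 0 ≤ g x)
    {s : Set ℝ} (hsm : MeasurableSet s) (hs : volume s = ⊤) {ε : ℝ} (hε : 0 < ε) :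
    ∃ x ∈ s, g x ≤ ε := by
  by_contra h
  push_neg at h
  have hc : Integrable (fun _ : ℝ => ε) (volume.restrict s) := by
    refine (hg.restrict (s := s)).mono' aestronglyMeasurable_const ?_
    refine (ae_restrict_iff' hsm).2 (Filter.Eventually.of_forall fun x hx => ?_)
    rw [Real.norm_of_nonneg hε.le]
    exact (h x hx).le
  rw [integrable_const_iff] at hc
  rcases hc with h0 | hfin
  · exact absurd h0 (ne_of_gt hε)
  · rw [isFiniteMeasure_restrict, hs] at hfin
    exact absurd hfin (by simp)

/-- The key symmetrization identity: `‖∫_a^b f‖² = 2 Re ∫_a^b conj(F t) f t dt`,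
where `F t = ∫_a^t f`; together with integrability of the integrand. -/
private lemma key_sq {f : ℝ → ℂ} (hm : AEStronglyMeasurable f volume)
    (h2 : Integrable (fun x => ‖f x‖ ^ 2)) {a b : ℝ} (hab : a ≤ b) :
    Integrable (fun t => (starRingEnd ℂ) (∫ s in Set.Ioc a t, f s) * f t)
      (volume.restrict (Set.Ioc a b)) ∧
    ‖∫ t in Set.Ioc a b, f t‖ ^ 2
      = 2 * (∫ t in Set.Ioc a b, (starRingEnd ℂ) (∫ s in Set.Ioc a t, f s) * f t).re := by
  set μ := volume.restrict (Set.Ioc a b) with hμ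
  have hfi : Integrable f μ := h1_integrableOn hm h2 measure_Ioc_lt_top
  have hconj : Integrable (fun x => (starRingEnd ℂ) (f x)) μ := integrable_conj' hfi
  set S : Set (ℝ × ℝ) := {p : ℝ × ℝ | p.1 ≤ p.2} with hS
  have hSmeas : MeasurableSet S := measurableSet_le measurable_fst measurable_snd
  set H : ℝ × ℝ → ℂ := S.indicator (fun p => (starRingEnd ℂ) (f p.1) * f p.2) with hHdef
  have hH : Integrable H (μ.prod μ) := (hconj.mul_prod hfi).indicator hSmeas
  have rep1 : ∀ t ∈ Set.Ioc a b,
      (∫ s, H (s, t) ∂μ) = (starRingEnd ℂ) (∫ s in Set.Ioc a t, f s) * f t := by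
    intro t ht
    have heq : (fun s => H (s, t))
        = fun s => (Set.Iic t).indicator (fun s => (starRingEnd ℂ) (f s) * f t) s := by
      funext s
      by_cases h : s ≤ t <;> simp [hHdef, hS, Set.indicator, h]
    rw [heq, hμ, setIntegral_indicator measurableSet_Iic, Set.Ioc_inter_Iic,
      min_eq_right ht.2, integral_mul_const, ← integral_conj]
  have rep2 : ∀ s ∈ Set.Ioc a b,
      (∫ t, H (s, t) ∂μ) = (starRingEnd ℂ) (f s) * ∫ t in Set.Ioc s b, f t := by
    intro s hs
    have heq : (fun t => H (s, t))
        = fun t => (Set.Ici s).indicator (fun t => (starRingEnd ℂ) (f s) * f t) t := by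
      funext t
      by_cases h : s ≤ t <;> simp [hHdef, hS, Set.indicator, h]
    have hset : Set.Ioc a b ∩ Set.Ici s = Set.Icc s b := by
      ext x
      simp only [Set.mem_inter_iff, Set.mem_Ioc, Set.mem_Ici, Set.mem_Icc]
      constructor
      · rintro ⟨⟨_, h2'⟩, h3⟩; exact ⟨h3, h2'⟩
      · rintro ⟨h1', h2'⟩; exact ⟨⟨lt_of_lt_of_le hs.1 h1', h2'⟩, h1'⟩
    rw [heq, hμ, setIntegral_indicator measurableSet_Ici, hset,
      integral_Icc_eq_integral_Ioc, integral_const_mul]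
  have hH' : Integrable (Function.uncurry fun s t => H (s, t)) (μ.prod μ) := by
    exact hH
  have hint1 : Integrable (fun t => (starRingEnd ℂ) (∫ s in Set.Ioc a t, f s) * f t) μ := by
    refine (hH.integral_prod_right).congr ?_
    filter_upwards [ae_restrict_mem measurableSet_Ioc] with t ht
    exact rep1 t ht
  have hint2 : Integrable (fun s => (starRingEnd ℂ) (f s) * ∫ t in Set.Ioc s b, f t) μ := by
    refine (hH.integral_prod_left).congr ?_
    filter_upwards [ae_restrict_mem measurableSet_Ioc] with s hs
    exact rep2 s hs
  refine ⟨hint1, ?_⟩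
  set I : ℂ := ∫ t in Set.Ioc a b, f t with hI
  set T : ℂ := ∫ t in Set.Ioc a b, (starRingEnd ℂ) (∫ s in Set.Ioc a t, f s) * f t with hT
  have hii : ∀ c d : ℝ, IntervalIntegrable f volume c d := h1_intervalIntegrable hm h2
  -- T as an iterated integral, swapped
  have hT1 : T = ∫ t, (∫ s, H (s, t) ∂μ) ∂μ := by
    rw [hT]
    refine (integral_congr_ae ?_).symm
    filter_upwards [ae_restrict_mem measurableSet_Ioc] with t ht
    exact rep1 t ht
  have hswap : (∫ s, (∫ t, H (s, t) ∂μ) ∂μ) = ∫ t, (∫ s, H (s, t) ∂μ) ∂μ :=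
    integral_integral_swap hH'
  have hT2 : T = ∫ s in Set.Ioc a b, (starRingEnd ℂ) (f s) * ∫ t in Set.Ioc s b, f t := by
    rw [hT1, ← hswap]
    refine integral_congr_ae ?_
    filter_upwards [ae_restrict_mem measurableSet_Ioc] with s hs
    exact rep2 s hs
  -- conj T
  have hconjT : (starRingEnd ℂ) T
      = ∫ s in Set.Ioc a b, f s * (starRingEnd ℂ) (∫ t in Set.Ioc s b, f t) := by
    rw [hT2, ← integral_conj]
    refine integral_congr_ae (Filter.Eventually.of_forall fun s => ?_)
    simp [mul_comm]
  have hint2' : Integrable (fun s => f s * (starRingEnd ℂ) (∫ t in Set.Ioc s b, f t)) μ := by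
    have := integrable_conj' hint2
    refine this.congr (Filter.Eventually.of_forall fun s => ?_)
    simp [mul_comm]
  -- sum identity
  have hsum : T + (starRingEnd ℂ) T = I * (starRingEnd ℂ) I := by
    rw [hT, hconjT, ← integral_add hint1 hint2']
    have : ∀ t ∈ Set.Ioc a b,
        (starRingEnd ℂ) (∫ s in Set.Ioc a t, f s) * f t
          + f t * (starRingEnd ℂ) (∫ s in Set.Ioc t b, f s)
        = f t * (starRingEnd ℂ) I := by
      intro t ht
      have hadd : (∫ s in Set.Ioc a t, f s) + ∫ s in Set.Ioc t b, f s = I := by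
        rw [hI, ← intervalIntegral.integral_of_le ht.1.le, ← intervalIntegral.integral_of_le ht.2,
          ← intervalIntegral.integral_of_le hab]
        exact intervalIntegral.integral_add_adjacent_intervals (hii a t) (hii t b)
      calc (starRingEnd ℂ) (∫ s in Set.Ioc a t, f s) * f t
            + f t * (starRingEnd ℂ) (∫ s in Set.Ioc t b, f s)
          = f t * (starRingEnd ℂ) ((∫ s in Set.Ioc a t, f s) + ∫ s in Set.Ioc t b, f s) := by
            rw [map_add]; ring
        _ = f t * (starRingEnd ℂ) I := by rw [hadd]
    rw [integral_congr_ae (g := fun t => f t * (starRingEnd ℂ) I) ?_]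
    · rw [integral_mul_const]
    · filter_upwards [ae_restrict_mem measurableSet_Ioc] with t ht
      exact this t ht
  -- take real parts
  have hre : 2 * T.re = Complex.normSq I := by
    have h1 : (T + (starRingEnd ℂ) T).re = 2 * T.re := by
      rw [Complex.add_re, Complex.conj_re]; ring
    have h2 : (I * (starRingEnd ℂ) I).re = Complex.normSq I := by
      rw [Complex.mul_conj, Complex.ofReal_re]
    rw [← h1, hsum, h2]
  rw [norm_sq_eq_normSq, ← hre]

/-- FTC-type identity for the square of the norm. -/
private lemma sq_norm_sub {ψ ψ' : ℝ → ℂ} (hψ : IsH1 ψ ψ') {a b : ℝ} (hab : a ≤ b) :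
    ‖ψ b‖ ^ 2 - ‖ψ a‖ ^ 2
      = 2 * (∫ t in Set.Ioc a b, (starRingEnd ℂ) (ψ t) * ψ' t).re := by
  obtain ⟨hc, hm', hrep, hL2, hL2'⟩ := hψ
  have hii : ∀ c d : ℝ, IntervalIntegrable ψ' volume c d := h1_intervalIntegrable hm' hL2'
  have hAt : ∀ t : ℝ, ψ t = ψ a + ∫ s in a..t, ψ' s := by
    intro t
    have h := intervalIntegral.integral_interval_sub_left (hii 0 t) (hii 0 a)
    rw [hrep t, hrep a]
    linear_combination h
  obtain ⟨hint, hkey⟩ := key_sq hm' hL2' hab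
  have hfi : Integrable ψ' (volume.restrict (Set.Ioc a b)) :=
    h1_integrableOn hm' hL2' measure_Ioc_lt_top
  set I : ℂ := ∫ t in Set.Ioc a b, ψ' t with hI
  have hb : ψ b = ψ a + I := by
    rw [hAt b, intervalIntegral.integral_of_le hab]
  have hsplit : (∫ t in Set.Ioc a b, (starRingEnd ℂ) (ψ t) * ψ' t)
      = (starRingEnd ℂ) (ψ a) * I
        + ∫ t in Set.Ioc a b, (starRingEnd ℂ) (∫ s in Set.Ioc a t, ψ' s) * ψ' t := by
    have hptwise : ∀ t ∈ Set.Ioc a b,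
        (starRingEnd ℂ) (ψ t) * ψ' t
          = (starRingEnd ℂ) (ψ a) * ψ' t
            + (starRingEnd ℂ) (∫ s in Set.Ioc a t, ψ' s) * ψ' t := by
      intro t ht
      rw [hAt t, intervalIntegral.integral_of_le ht.1.le, map_add]
      ring
    rw [integral_congr_ae (g := fun t =>
        (starRingEnd ℂ) (ψ a) * ψ' t
          + (starRingEnd ℂ) (∫ s in Set.Ioc a t, ψ' s) * ψ' t) ?_]
    · rw [integral_add (hfi.const_mul _) hint, integral_const_mul]
    · filter_upwards [ae_restrict_mem measurableSet_Ioc] with t ht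
      exact hptwise t ht
  rw [hsplit, hb]
  have h3 : Complex.normSq I
      = 2 * (∫ t in Set.Ioc a b, (starRingEnd ℂ) (∫ s in Set.Ioc a t, ψ' s) * ψ' t).re := by
    rw [← norm_sq_eq_normSq]; exact hkey
  have h5 : ‖ψ a + I‖ ^ 2 - ‖ψ a‖ ^ 2
      = 2 * ((starRingEnd ℂ) (ψ a) * I).re + Complex.normSq I := by
    rw [norm_sq_eq_normSq, norm_sq_eq_normSq, Complex.normSq_add, Complex.mul_re,
      Complex.mul_re, Complex.conj_re, Complex.conj_re, Complex.conj_im, Complex.conj_im]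
    ring
  rw [Complex.add_re]
  linarith [h3, h5]

/-- If `‖ψ‖²_{L²} < 2` then the energy `E(ψ) = (1/2)‖ψ'‖²_{L²} - (1/4)|ψ(0)|⁴` is
nonnegative and `‖ψ'‖²_{L²} ≤ 2E(ψ)/(1 - ‖ψ‖²_{L²}/2)`. -/
theorem stmt4 (ψ ψ' : ℝ → ℂ) (hψ : IsH1 ψ ψ')
    (hmass : (∫ x : ℝ, ‖ψ x‖ ^ 2) < 2) :
    0 ≤ (1/2) * (∫ x : ℝ, ‖ψ' x‖ ^ 2) - (1/4) * ‖ψ 0‖ ^ 4 ∧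
    (∫ x : ℝ, ‖ψ' x‖ ^ 2) ≤
      2 * ((1/2) * (∫ x : ℝ, ‖ψ' x‖ ^ 2) - (1/4) * ‖ψ 0‖ ^ 4) /
        (1 - (∫ x : ℝ, ‖ψ x‖ ^ 2) / 2) := by
  obtain ⟨hc, hm', hrep, hL2, hL2'⟩ := hψ
  set M : ℝ := ∫ x : ℝ, ‖ψ x‖ ^ 2 with hM
  set D : ℝ := ∫ x : ℝ, ‖ψ' x‖ ^ 2 with hD
  have hMnn : 0 ≤ M := integral_nonneg fun x => sq_nonneg _
  have hDnn : 0 ≤ D := integral_nonneg fun x => sq_nonneg _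
  -- integrability of ‖ψ‖‖ψ'‖
  have hKint : Integrable (fun x => ‖ψ x‖ * ‖ψ' x‖) volume := by
    refine (hL2.add hL2').mono' ((hc.aestronglyMeasurable.norm).mul hm'.norm) ?_
    refine Filter.Eventually.of_forall fun x => ?_
    rw [Real.norm_of_nonneg (mul_nonneg (norm_nonneg _) (norm_nonneg _))]
    simp only [Pi.add_apply]
    nlinarith [sq_nonneg (‖ψ x‖ - ‖ψ' x‖)]
  set K : ℝ := ∫ x : ℝ, ‖ψ x‖ * ‖ψ' x‖ with hK
  have hKnn : 0 ≤ K := integral_nonneg fun x => mul_nonneg (norm_nonneg _) (norm_nonneg _)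
  -- difference bound
  have habs : ∀ a b : ℝ, a ≤ b →
      |‖ψ b‖ ^ 2 - ‖ψ a‖ ^ 2| ≤ 2 * ∫ t in Set.Ioc a b, ‖ψ t‖ * ‖ψ' t‖ := by
    intro a b hab
    rw [sq_norm_sub ⟨hc, hm', hrep, hL2, hL2'⟩ hab, abs_mul, _root_.abs_two]
    have h1 : |(∫ t in Set.Ioc a b, (starRingEnd ℂ) (ψ t) * ψ' t).re|
        ≤ ‖∫ t in Set.Ioc a b, (starRingEnd ℂ) (ψ t) * ψ' t‖ := by
      exact Complex.abs_re_le_norm _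
    have h2 : ‖∫ t in Set.Ioc a b, (starRingEnd ℂ) (ψ t) * ψ' t‖
        ≤ ∫ t in Set.Ioc a b, ‖ψ t‖ * ‖ψ' t‖ := by
      refine (norm_integral_le_integral_norm _).trans_eq ?_
      refine integral_congr_ae (Filter.Eventually.of_forall fun t => ?_)
      simp [norm_mul]
    linarith
  -- bound ‖ψ 0‖² ≤ K
  have hg0 : ‖ψ 0‖ ^ 2 ≤ K := by
    refine le_of_forall_pos_le_add fun ε hε => ?_
    obtain ⟨b, hb1, hbε⟩ := exists_small hL2 (fun x => sq_nonneg _)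
      measurableSet_Ici (Real.volume_Ici (a := 1)) hε
    obtain ⟨a, ha1, haε⟩ := exists_small hL2 (fun x => sq_nonneg _)
      measurableSet_Iic (Real.volume_Iic (a := -1)) hε
    rw [Set.mem_Ici] at hb1
    rw [Set.mem_Iic] at ha1
    have ha0 : a ≤ 0 := by linarith
    have hb0 : (0:ℝ) ≤ b := by linarith
    have d1 := habs a 0 ha0
    have d2 := habs 0 b hb0
    have hP : (∫ t in Set.Ioc a 0, ‖ψ t‖ * ‖ψ' t‖) ≤ ∫ t in Set.Iic 0, ‖ψ t‖ * ‖ψ' t‖ := by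
      refine setIntegral_mono_set hKint.integrableOn ?_
        (HasSubset.Subset.eventuallyLE Set.Ioc_subset_Iic_self)
      exact Filter.Eventually.of_forall fun t => mul_nonneg (norm_nonneg _) (norm_nonneg _)
    have hQ : (∫ t in Set.Ioc 0 b, ‖ψ t‖ * ‖ψ' t‖) ≤ ∫ t in Set.Ioi 0, ‖ψ t‖ * ‖ψ' t‖ := by
      refine setIntegral_mono_set hKint.integrableOn ?_
        (HasSubset.Subset.eventuallyLE Set.Ioc_subset_Ioi_self)
      exact Filter.Eventually.of_forall fun t => mul_nonneg (norm_nonneg _) (norm_nonneg _)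
    have hPQ : (∫ t in Set.Iic 0, ‖ψ t‖ * ‖ψ' t‖) + (∫ t in Set.Ioi 0, ‖ψ t‖ * ‖ψ' t‖) = K := by
      rw [← setIntegral_union (Set.Iic_disjoint_Ioi le_rfl) measurableSet_Ioi
        hKint.integrableOn hKint.integrableOn, Set.Iic_union_Ioi, setIntegral_univ]
    have e1 : ‖ψ 0‖ ^ 2 - ‖ψ a‖ ^ 2 ≤ 2 * ∫ t in Set.Ioc a 0, ‖ψ t‖ * ‖ψ' t‖ :=
      (le_abs_self _).trans d1
    have e2 : ‖ψ 0‖ ^ 2 - ‖ψ b‖ ^ 2 ≤ 2 * ∫ t in Set.Ioc 0 b, ‖ψ t‖ * ‖ψ' t‖ := by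
      have := (neg_abs_le _).trans_eq (rfl : |‖ψ b‖ ^ 2 - ‖ψ 0‖ ^ 2| = _)
      linarith [d2, neg_abs_le (‖ψ b‖ ^ 2 - ‖ψ 0‖ ^ 2), le_abs_self (‖ψ b‖ ^ 2 - ‖ψ 0‖ ^ 2)]
    linarith
  -- Cauchy-Schwarz: K² ≤ M D
  have hcs : K ^ 2 ≤ M * D := by
    refine cs_aux hMnn hKnn fun t => ?_
    have h1 : 0 ≤ ∫ x : ℝ, (t * ‖ψ x‖ - ‖ψ' x‖) ^ 2 := integral_nonneg fun x => sq_nonneg _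
    have h2 : (∫ x : ℝ, (t * ‖ψ x‖ - ‖ψ' x‖) ^ 2)
        = (t ^ 2 * M + (-(2 * t)) * K) + D := by
      have hptwise : (fun x : ℝ => (t * ‖ψ x‖ - ‖ψ' x‖) ^ 2)
          = fun x => (t ^ 2 * ‖ψ x‖ ^ 2 + (-(2 * t)) * (‖ψ x‖ * ‖ψ' x‖)) + ‖ψ' x‖ ^ 2 := by
        funext x; ring
      have i1 : Integrable (fun x : ℝ => t ^ 2 * ‖ψ x‖ ^ 2 + (-(2 * t)) * (‖ψ x‖ * ‖ψ' x‖))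
          volume := (hL2.const_mul _).add (hKint.const_mul _)
      rw [hptwise, integral_add i1 hL2',
        integral_add (hL2.const_mul _) (hKint.const_mul _), integral_const_mul, integral_const_mul]
    nlinarith [h1, h2]
  have h4 : ‖ψ 0‖ ^ 4 ≤ M * D := by
    have : ‖ψ 0‖ ^ 4 = (‖ψ 0‖ ^ 2) ^ 2 := by ring
    rw [this]
    calc (‖ψ 0‖ ^ 2) ^ 2 ≤ K ^ 2 := by
          have := sq_nonneg (‖ψ 0‖)
          nlinarith
      _ ≤ M * D := hcs
  constructor
  · nlinarith
  · rw [le_div_iff₀ (by linarith : (0:ℝ) < 1 - M / 2)]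
    nlinarith
end

section
/- Virial identity: for a sufficiently regular finite-variance solution ψ of the point-nonlinearity NLS, d²/dt² ∫ x²|ψ(x,t)|² dx = 8‖ψ_x(t)‖²_{L²} - 4|ψ(0,t)|^{p+1} = 4(p+1)E(ψ) + (8 - 2(p+1))‖ψ_x(t)‖²_{L²}. In particular for p = 3 the right side equals 16E(ψ). -/
open MeasureTheory Filter Set
open scoped Topology ComplexConjugate

namespace Stmt16Aux

lemma aesm_of_contOn {E : Type*} [NormedAddCommGroup E] {f : ℝ → E}
    (hf : ContinuousOn f {(0:ℝ)}ᶜ) : AEStronglyMeasurable f (volume : Measure ℝ) := by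
  have := hf.aestronglyMeasurable (μ := volume) (measurableSet_singleton (0:ℝ)).compl
  rwa [MeasureTheory.restrict_compl_singleton] at this

lemma integrable_of_contOn {E : Type*} [NormedAddCommGroup E] {f : ℝ → E} {g : ℝ → ℝ}
    (hg : Integrable g) (hc : ContinuousOn f {(0:ℝ)}ᶜ) (hb : ∀ x, ‖f x‖ ≤ g x) :
    Integrable f :=
  hg.mono' (aesm_of_contOn hc) (Eventually.of_forall hb)

lemma key_ibp {E : Type*} [NormedAddCommGroup E] [NormedSpace ℝ E] [CompleteSpace E]
    {f f' : ℝ → E} {g : ℝ → ℝ} (hg : Integrable g)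
    (hd : ∀ x : ℝ, x ≠ 0 → HasDerivAt f (f' x) x)
    (hc' : ContinuousOn f' {(0:ℝ)}ᶜ)
    (hb' : ∀ x, ‖f' x‖ ≤ g x)
    (hb : ∀ x : ℝ, 1 ≤ |x| → ‖f x‖ ≤ g x)
    {Lp Lm : E}
    (hLp : Tendsto f (𝓝[>] (0:ℝ)) (𝓝 Lp))
    (hLm : Tendsto f (𝓝[<] (0:ℝ)) (𝓝 Lm)) :
    Integrable f' ∧ ∫ x, f' x = Lm - Lp := by
  have hint : Integrable f' := integrable_of_contOn hg hc' hb'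
  have hfc : ∀ x : ℝ, x ≠ 0 → ContinuousAt f x := fun x hx => (hd x hx).continuousAt
  have htop : Tendsto f atTop (𝓝 0) := by
    apply tendsto_zero_of_hasDerivAt_of_integrableOn_Ioi (a := 1) (f' := f')
      (fun x hx => hd x (by have : (0:ℝ) < x := lt_trans one_pos hx; exact this.ne'))
      hint.integrableOn
    have hco : ContinuousOn f (Ioi 1) :=
      fun x hx => (hfc x (lt_trans one_pos hx).ne').continuousWithinAt
    apply Integrable.mono' (hg.integrableOn) (hco.aestronglyMeasurable measurableSet_Ioi)
    rw [ae_restrict_iff' measurableSet_Ioi]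
    exact Eventually.of_forall fun x hx => hb x (le_trans hx.out.le (le_abs_self x))
  have hbot : Tendsto f atBot (𝓝 0) := by
    apply tendsto_zero_of_hasDerivAt_of_integrableOn_Iic (a := -1) (f' := f')
      (fun x hx => hd x (by have : x < 0 := lt_of_le_of_lt hx.out (by norm_num); exact this.ne))
      hint.integrableOn
    have hco : ContinuousOn f (Iic (-1)) := fun x hx =>
      (hfc x (lt_of_le_of_lt hx.out (by norm_num : (-1:ℝ) < 0)).ne).continuousWithinAt
    apply Integrable.mono' (hg.integrableOn) (hco.aestronglyMeasurable measurableSet_Iic)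
    rw [ae_restrict_iff' measurableSet_Iic]
    refine Eventually.of_forall fun x hx => hb x ?_
    rw [le_abs]; right; linarith [hx.out]
  have hIoi : ∫ x in Ioi (0:ℝ), f' x = -Lp := by
    set F := Function.update f 0 Lp with hF
    have hFd : ∀ x ∈ Ioi (0:ℝ), HasDerivAt F (f' x) x := by
      intro x hx
      apply (hd x hx.out.ne').congr_of_eventuallyEq
      filter_upwards [eventually_ne_nhds hx.out.ne'] with y hy
      exact Function.update_of_ne hy _ f
    have hFcont : ContinuousWithinAt F (Ici 0) 0 := by
      apply continuousWithinAt_update_same.mpr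
      rwa [Ici_sdiff_left]
    have hFtop : Tendsto F atTop (𝓝 0) := by
      apply htop.congr'
      filter_upwards [eventually_ne_atTop (0:ℝ)] with x hx
      exact (Function.update_of_ne hx _ f).symm
    rw [integral_Ioi_of_hasDerivAt_of_tendsto hFcont hFd hint.integrableOn hFtop]
    simp [hF]
  have hIic : ∫ x in Iic (0:ℝ), f' x = Lm := by
    set F := Function.update f 0 Lm with hF
    have hFd : ∀ x ∈ Iio (0:ℝ), HasDerivAt F (f' x) x := by
      intro x hx
      apply (hd x hx.out.ne).congr_of_eventuallyEq
      filter_upwards [eventually_ne_nhds hx.out.ne] with y hy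
      exact Function.update_of_ne hy _ f
    have hFcont : ContinuousWithinAt F (Iic 0) 0 := by
      apply continuousWithinAt_update_same.mpr
      rwa [Iic_diff_right]
    have hFbot : Tendsto F atBot (𝓝 0) := by
      apply hbot.congr'
      filter_upwards [eventually_ne_atBot (0:ℝ)] with x hx
      exact (Function.update_of_ne hx _ f).symm
    rw [integral_Iic_of_hasDerivAt_of_tendsto hFcont hFd hint.integrableOn hFbot]
    simp [hF]
  refine ⟨hint, ?_⟩
  rw [← setIntegral_univ, ← Set.Iic_union_Ioi (a := (0:ℝ)),
    setIntegral_union (Iic_disjoint_Ioi le_rfl) measurableSet_Ioi hint.integrableOn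
      hint.integrableOn, hIic, hIoi]
  abel

lemma conj_mul_re_symm (a b : ℂ) : ((starRingEnd ℂ) a * b).re = ((starRingEnd ℂ) b * a).re := by
  simp [Complex.mul_re]; ring

lemma conj_mul_im_antisymm (a b : ℂ) :
    ((starRingEnd ℂ) a * b).im = -(((starRingEnd ℂ) b * a).im) := by
  simp [Complex.mul_im]; ring

lemma conj_mul_self_re (a : ℂ) : ((starRingEnd ℂ) a * a).re = ‖a‖^2 := by
  rw [← Complex.normSq_eq_conj_mul_self, Complex.ofReal_re, ← Complex.sq_norm]

lemma conj_mul_self_im (a : ℂ) : ((starRingEnd ℂ) a * a).im = 0 := by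
  rw [← Complex.normSq_eq_conj_mul_self]; simp

lemma norm_conj_mul (a b : ℂ) : ‖(starRingEnd ℂ) a * b‖ = ‖a‖ * ‖b‖ := by
  simp [norm_mul]

lemma ofReal_mul_im (r : ℝ) (z : ℂ) : ((r:ℂ) * z).im = r * z.im := by
  simp [Complex.mul_im]

lemma ofReal_mul_re (r : ℝ) (z : ℂ) : ((r:ℂ) * z).re = r * z.re := by
  simp [Complex.mul_re]

lemma hasDerivAt_conj_mul {u v : ℝ → ℂ} {u' v' : ℂ} {x : ℝ}
    (hu : HasDerivAt u u' x) (hv : HasDerivAt v v' x) :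
    HasDerivAt (fun y => (starRingEnd ℂ) (u y) * v y)
      ((starRingEnd ℂ) u' * v x + (starRingEnd ℂ) (u x) * v') x := by
  have := hu.star.mul hv
  simp only [starRingEnd_apply]
  exact this

lemma hasDerivAt_ofReal (x : ℝ) : HasDerivAt (fun y : ℝ => (y:ℂ)) 1 x := by
  exact Complex.ofRealCLM.hasDerivAt (x := x)

lemma hasDerivAt_ofReal_sq (x : ℝ) : HasDerivAt (fun y : ℝ => ((y:ℂ))^2) (2*(x:ℂ)) x := by
  have h := (hasDerivAt_ofReal x).mul (hasDerivAt_ofReal x)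
  have e : (fun y : ℝ => (y:ℂ)*(y:ℂ)) = fun y : ℝ => ((y:ℂ))^2 := by
    funext y; ring
  simp only [Pi.mul_def] at h
  rw [e] at h
  refine h.congr_deriv ?_
  ring

lemma hasDerivAt_norm_sq {u : ℝ → ℂ} {u' : ℂ} {s : ℝ} (hu : HasDerivAt u u' s) :
    HasDerivAt (fun y => ‖u y‖^2) (2 * ((starRingEnd ℂ) (u s) * u').re) s := by
  have h1 : HasDerivAt (fun y => (starRingEnd ℂ) (u y) * u y)
      ((starRingEnd ℂ) u' * u s + (starRingEnd ℂ) (u s) * u') s := by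
    have := hu.star.mul hu
    simp only [starRingEnd_apply]
    exact this
  have h2 := Complex.reCLM.hasFDerivAt.comp_hasDerivAt s h1
  simp only [Function.comp_def, Complex.reCLM_apply] at h2
  have h3 : (fun y => ((starRingEnd ℂ) (u y) * u y).re) = fun y => ‖u y‖^2 := by
    funext y
    exact conj_mul_self_re (u y)
  rw [h3] at h2
  refine h2.congr_deriv ?_
  rw [Complex.add_re, conj_mul_re_symm u' (u s)]
  ring

lemma integral_cmul (c : ℝ) (f : ℝ → ℝ) : ∫ x : ℝ, c * f x = c * ∫ x : ℝ, f x := by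
  simpa [smul_eq_mul] using integral_smul (μ := (volume : Measure ℝ)) c f

lemma integral_cim {f : ℝ → ℂ} (hf : Integrable f) :
    ∫ x : ℝ, (f x).im = (∫ x : ℝ, f x).im := by
  have := Complex.imCLM.integral_comp_comm hf
  simpa [Complex.imCLM_apply] using this

lemma integral_cre {f : ℝ → ℂ} (hf : Integrable f) :
    ∫ x : ℝ, (f x).re = (∫ x : ℝ, f x).re := by
  have := Complex.reCLM.integral_comp_comm hf
  simpa [Complex.reCLM_apply] using this

lemma abs_re_le_norm (z : ℂ) : |z.re| ≤ ‖z‖ := by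
  exact Complex.abs_re_le_norm z

lemma abs_im_le_norm (z : ℂ) : |z.im| ≤ ‖z‖ := by
  exact Complex.abs_im_le_norm z

end Stmt16Aux


open Stmt16Aux

structure PtNLS (p : ℝ) (ψ ψx ψxx ψt : ℝ → ℝ → ℂ) : Prop where
  hx : ∀ t : ℝ, ∀ x : ℝ, x ≠ 0 → HasDerivAt (fun y => ψ y t) (ψx x t) x
  hxx : ∀ t : ℝ, ∀ x : ℝ, x ≠ 0 → HasDerivAt (fun y => ψx y t) (ψxx x t) x
  ht : ∀ t : ℝ, ∀ x : ℝ, x ≠ 0 → HasDerivAt (fun s => ψ x s) (ψt x t) t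
  free : ∀ t : ℝ, ∀ x : ℝ, x ≠ 0 → Complex.I * ψt x t + ψxx x t = 0
  jump : ∀ t : ℝ, ∃ Dp Dm : ℂ,
    Tendsto (fun x => ψx x t) (nhdsWithin 0 (Set.Ioi 0)) (nhds Dp) ∧
    Tendsto (fun x => ψx x t) (nhdsWithin 0 (Set.Iio 0)) (nhds Dm) ∧
    Dp - Dm = -((‖ψ 0 t‖ ^ (p - 1) : ℝ) : ℂ) * ψ 0 t

/-- Regularity with finite variance: fields jointly continuous off `x = 0`, `ψ, ψxx, ψt`
continuous across `0`, and dominated with weight `(1 + x²)` by an integrable function. -/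
structure RegularVar (ψ ψx ψxx ψt : ℝ → ℝ → ℂ) : Prop where
  contψ : ∀ t : ℝ, Continuous fun y => ψ y t
  contψxx : ∀ t : ℝ, Filter.Tendsto (fun x => ψxx x t) (nhdsWithin 0 {(0:ℝ)}ᶜ) (nhds (ψxx 0 t))
  contψt : ∀ t : ℝ, Filter.Tendsto (fun x => ψt x t) (nhdsWithin 0 {(0:ℝ)}ᶜ) (nhds (ψt 0 t))
  jointCont : ContinuousOn (fun q : ℝ × ℝ => (ψ q.1 q.2, ψx q.1 q.2, ψxx q.1 q.2, ψt q.1 q.2))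
    {q : ℝ × ℝ | q.1 ≠ 0}
  decay : ∃ g : ℝ → ℝ, Integrable g ∧ ∀ t x : ℝ,
    (1 + x ^ 2) * (‖ψ x t‖ ^ 2 + ‖ψx x t‖ ^ 2 + ‖ψxx x t‖ ^ 2 + ‖ψt x t‖ ^ 2) ≤ g x

set_option maxHeartbeats 1000000 in
/-- Virial identity: `d²/dt² ∫ x²|ψ|² = 8‖ψ_x‖²_{L²} - 4|ψ(0,t)|^{p+1}
= 4(p+1)E(ψ) + (8-2(p+1))‖ψ_x‖²_{L²}`; for `p = 3` this is `16E(ψ)`. -/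
theorem stmt16 (p : ℝ) (hp : 1 < p) (ψ ψx ψxx ψt : ℝ → ℝ → ℂ)
    (h : PtNLS p ψ ψx ψxx ψt) (hreg : RegularVar ψ ψx ψxx ψt) :
    ∃ g : ℝ → ℝ,
      (∀ t : ℝ, HasDerivAt (fun s => ∫ x : ℝ, x ^ 2 * ‖ψ x s‖ ^ 2) (g t) t) ∧
      ∀ t : ℝ,
        HasDerivAt g (8 * (∫ x : ℝ, ‖ψx x t‖ ^ 2) - 4 * ‖ψ 0 t‖ ^ (p+1)) t ∧
        8 * (∫ x : ℝ, ‖ψx x t‖ ^ 2) - 4 * ‖ψ 0 t‖ ^ (p+1) =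
          4 * (p+1) * ((1/2) * (∫ x : ℝ, ‖ψx x t‖ ^ 2) - (1/(p+1)) * ‖ψ 0 t‖ ^ (p+1)) +
            (8 - 2 * (p+1)) * ∫ x : ℝ, ‖ψx x t‖ ^ 2 ∧
        (p = 3 →
          8 * (∫ x : ℝ, ‖ψx x t‖ ^ 2) - 4 * ‖ψ 0 t‖ ^ (p+1) =
            16 * ((1/2) * (∫ x : ℝ, ‖ψx x t‖ ^ 2) - (1/(p+1)) * ‖ψ 0 t‖ ^ (p+1))) := by
  classical
  obtain ⟨g0, hg0i, hg0⟩ := hreg.decay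
  have hg00 : ∀ x, 0 ≤ g0 x := fun x => le_trans (by positivity) (hg0 0 x)
  have h1x : ∀ x : ℝ, (0:ℝ) < 1 + x ^ 2 := fun x => by positivity
  set β : ℝ → ℝ := fun x => Real.sqrt (g0 x / (1 + x ^ 2)) with hβdef
  have hβ0 : ∀ x, 0 ≤ β x := fun x => Real.sqrt_nonneg _
  have hββ' : ∀ x, β x * β x = g0 x / (1 + x ^ 2) := fun x =>
    Real.mul_self_sqrt (div_nonneg (hg00 x) (h1x x).le)
  have hsqle : ∀ (a : ℝ) (x : ℝ), 0 ≤ a → a ^ 2 * (1 + x ^ 2) ≤ g0 x → a ≤ β x := by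
    intro a x ha hle
    refine (Real.le_sqrt ha (div_nonneg (hg00 x) (h1x x).le)).mpr ?_
    rw [le_div_iff₀ (h1x x)]
    exact hle
  have hbψ : ∀ t x, ‖ψ x t‖ ≤ β x := by
    intro t x
    refine hsqle _ x (norm_nonneg _) ?_
    nlinarith [hg0 t x, sq_nonneg ‖ψx x t‖, sq_nonneg ‖ψxx x t‖, sq_nonneg ‖ψt x t‖,
      sq_nonneg ‖ψ x t‖, sq_nonneg x]
  have hbψx : ∀ t x, ‖ψx x t‖ ≤ β x := by
    intro t x
    refine hsqle _ x (norm_nonneg _) ?_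
    nlinarith [hg0 t x, sq_nonneg ‖ψ x t‖, sq_nonneg ‖ψxx x t‖, sq_nonneg ‖ψt x t‖,
      sq_nonneg ‖ψx x t‖, sq_nonneg x]
  have hbψxx : ∀ t x, ‖ψxx x t‖ ≤ β x := by
    intro t x
    refine hsqle _ x (norm_nonneg _) ?_
    nlinarith [hg0 t x, sq_nonneg ‖ψ x t‖, sq_nonneg ‖ψx x t‖, sq_nonneg ‖ψt x t‖,
      sq_nonneg ‖ψxx x t‖, sq_nonneg x]
  have hbψt : ∀ t x, ‖ψt x t‖ ≤ β x := by
    intro t x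
    refine hsqle _ x (norm_nonneg _) ?_
    nlinarith [hg0 t x, sq_nonneg ‖ψ x t‖, sq_nonneg ‖ψx x t‖, sq_nonneg ‖ψxx x t‖,
      sq_nonneg ‖ψt x t‖, sq_nonneg x]
  have hββ : ∀ x, β x * β x ≤ g0 x := by
    intro x
    rw [hββ' x]
    exact div_le_self (hg00 x) (by nlinarith [sq_nonneg x])
  have hxββ : ∀ x : ℝ, |x| * (β x * β x) ≤ g0 x := by
    intro x
    rw [hββ' x, ← mul_div_assoc, div_le_iff₀ (h1x x)]
    nlinarith [hg00 x, abs_nonneg x, sq_abs x, sq_nonneg (|x| - 1), mul_nonneg (hg00 x) (sq_nonneg x)]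
  have hx2ββ : ∀ x : ℝ, x ^ 2 * (β x * β x) ≤ g0 x := by
    intro x
    rw [hββ' x, ← mul_div_assoc, div_le_iff₀ (h1x x)]
    nlinarith [hg00 x, sq_nonneg x]
  -- continuity infrastructure
  have hJ : ∀ t : ℝ, ContinuousOn (fun x => (ψ x t, ψx x t, ψxx x t, ψt x t)) {(0:ℝ)}ᶜ := by
    intro t
    exact hreg.jointCont.comp ((continuous_id.prodMk continuous_const).continuousOn)
      (fun x hx => hx)
  have hcψ : ∀ t, ContinuousOn (fun x => ψ x t) {(0:ℝ)}ᶜ := fun t => (hreg.contψ t).continuousOn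
  have hcψx : ∀ t, ContinuousOn (fun x => ψx x t) {(0:ℝ)}ᶜ := fun t =>
    (continuous_fst.comp continuous_snd).comp_continuousOn (hJ t)
  have hcψxx : ∀ t, ContinuousOn (fun x => ψxx x t) {(0:ℝ)}ᶜ := fun t =>
    (continuous_fst.comp (continuous_snd.comp continuous_snd)).comp_continuousOn (hJ t)
  have hcψt : ∀ t, ContinuousOn (fun x => ψt x t) {(0:ℝ)}ᶜ := fun t =>
    (continuous_snd.comp (continuous_snd.comp continuous_snd)).comp_continuousOn (hJ t)
  have hopen : IsOpen {q : ℝ × ℝ | q.1 ≠ 0} :=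
    isOpen_compl_singleton.preimage continuous_fst
  have hJt : ∀ x : ℝ, x ≠ 0 → ∀ t : ℝ,
      ContinuousAt (fun s => (ψ x s, ψx x s, ψxx x s, ψt x s)) t := by
    intro x hx t
    have h1 : ContinuousAt (fun q : ℝ × ℝ => (ψ q.1 q.2, ψx q.1 q.2, ψxx q.1 q.2, ψt q.1 q.2))
        (x, t) := hreg.jointCont.continuousAt (hopen.mem_nhds hx)
    exact h1.comp ((continuous_const.prodMk continuous_id).continuousAt)
  have hctψx : ∀ x : ℝ, x ≠ 0 → ∀ t, ContinuousAt (fun s => ψx x s) t := fun x hx t =>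
    ((continuous_fst.comp continuous_snd).continuousAt).comp (hJt x hx t)
  have hlaw : ∀ t x, x ≠ 0 → ψt x t = Complex.I * ψxx x t := fun t x hx => by
    linear_combination (-Complex.I) * h.free t x hx + ψt x t * Complex.I_sq
  have hae0 : ∀ᵐ x : ℝ, x ≠ (0:ℝ) := by
    have hs : {x : ℝ | ¬ x ≠ 0} = {(0:ℝ)} := by ext y; simp
    rw [ae_iff, hs]
    exact measure_singleton 0
  have hnorm2 : ∀ (a b : ℂ) (x : ℝ), ‖a‖ ≤ β x → ‖b‖ ≤ β x →
      ‖(starRingEnd ℂ) a * b‖ ≤ β x * β x := by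
    intro a b x ha hb
    rw [norm_conj_mul]
    exact mul_le_mul ha hb (norm_nonneg _) (hβ0 x)
  have hcoe : Continuous (fun x : ℝ => (x:ℂ)) := Complex.continuous_ofReal
  have hnx : ∀ x : ℝ, ‖(x:ℂ)‖ = |x| := fun x => by
    rw [Complex.norm_real, Real.norm_eq_abs]
  have h2n : ‖(2:ℂ)‖ = 2 := by norm_num
  have hcjC : Continuous (fun z : ℂ => (starRingEnd ℂ) z) := RCLike.continuous_conj
  -- generic integrability
  have hIbase : ∀ (F : ℝ → ℂ) (c : ℝ), ContinuousOn F {(0:ℝ)}ᶜ →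
      (∀ x, ‖F x‖ ≤ c * g0 x) → Integrable F := fun F c hc hb =>
    integrable_of_contOn (hg0i.const_mul c) hc hb
  have hIbaseR : ∀ (F : ℝ → ℝ) (c : ℝ), ContinuousOn F {(0:ℝ)}ᶜ →
      (∀ x, ‖F x‖ ≤ c * g0 x) → Integrable F := fun F c hc hb =>
    integrable_of_contOn (hg0i.const_mul c) hc hb
  -- Part 1 : differentiate the variance under the integral sign
  have hder1 : ∀ t : ℝ, HasDerivAt (fun s => ∫ x : ℝ, x ^ 2 * ‖ψ x s‖ ^ 2)
      (∫ x : ℝ, 2 * x ^ 2 * ((starRingEnd ℂ) (ψ x t) * ψt x t).re) t := by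
    intro t
    have hmeas : ∀ᶠ s in 𝓝 t, AEStronglyMeasurable (fun x : ℝ => x ^ 2 * ‖ψ x s‖ ^ 2)
        (volume : Measure ℝ) :=
      Eventually.of_forall fun s =>
        ((continuous_pow 2).mul ((hreg.contψ s).norm.pow 2)).aestronglyMeasurable
    have hint : Integrable (fun x : ℝ => x ^ 2 * ‖ψ x t‖ ^ 2) := by
      refine integrable_of_contOn hg0i
        (((continuous_pow 2).mul ((hreg.contψ t).norm.pow 2)).continuousOn) ?_
      intro x
      rw [Real.norm_eq_abs, abs_of_nonneg (by positivity)]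
      nlinarith [hg0 t x, sq_nonneg ‖ψx x t‖, sq_nonneg ‖ψxx x t‖, sq_nonneg ‖ψt x t‖,
        sq_nonneg ‖ψ x t‖, sq_nonneg x]
    have hcF' : ContinuousOn (fun x : ℝ => 2 * x ^ 2 * ((starRingEnd ℂ) (ψ x t) * ψt x t).re)
        {(0:ℝ)}ᶜ := by
      refine ContinuousOn.mul (continuous_const.mul (continuous_pow 2)).continuousOn ?_
      exact Complex.continuous_re.comp_continuousOn
        ((hcjC.comp_continuousOn (hcψ t)).mul (hcψt t))
    have hbound : ∀ᵐ x : ℝ, ∀ s ∈ Metric.ball t 1,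
        ‖2 * x ^ 2 * ((starRingEnd ℂ) (ψ x s) * ψt x s).re‖ ≤ 2 * g0 x := by
      refine Eventually.of_forall fun x s _ => ?_
      rw [Real.norm_eq_abs, abs_mul, abs_of_nonneg (show (0:ℝ) ≤ 2 * x ^ 2 by positivity)]
      have h1 : |((starRingEnd ℂ) (ψ x s) * ψt x s).re| ≤ β x * β x :=
        le_trans (abs_re_le_norm _) (hnorm2 _ _ x (hbψ s x) (hbψt s x))
      calc 2 * x ^ 2 * |((starRingEnd ℂ) (ψ x s) * ψt x s).re|
          ≤ 2 * x ^ 2 * (β x * β x) := by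
            apply mul_le_mul_of_nonneg_left h1 (by positivity)
        _ = 2 * (x ^ 2 * (β x * β x)) := by ring
        _ ≤ 2 * g0 x := by linarith [hx2ββ x]
    have hdiff : ∀ᵐ x : ℝ, ∀ s ∈ Metric.ball t 1,
        HasDerivAt (fun s' => x ^ 2 * ‖ψ x s'‖ ^ 2)
          (2 * x ^ 2 * ((starRingEnd ℂ) (ψ x s) * ψt x s).re) s := by
      filter_upwards [hae0] with x hx
      intro s _
      have h2 := (hasDerivAt_norm_sq (h.ht s x hx)).const_mul (x ^ 2)
      refine h2.congr_deriv ?_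
      ring
    exact (hasDerivAt_integral_of_dominated_loc_of_deriv_le (Metric.ball_mem_nhds t one_pos) hmeas hint
      (aesm_of_contOn hcF') hbound (hg0i.const_mul 2) hdiff).2
  -- the first-derivative function, rewritten via integration by parts
  have hg1G : ∀ s : ℝ, (∫ x : ℝ, 2 * x ^ 2 * ((starRingEnd ℂ) (ψ x s) * ψt x s).re)
      = ∫ x : ℝ, 4 * x * ((starRingEnd ℂ) (ψ x s) * ψx x s).im := by
    intro s
    obtain ⟨Dp, Dm, hDp, hDm, -⟩ := h.jump s
    have hψ0p : Tendsto (fun x => ψ x s) (𝓝[>] (0:ℝ)) (𝓝 (ψ 0 s)) :=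
      ((hreg.contψ s).tendsto 0).mono_left nhdsWithin_le_nhds
    have hx0p : Tendsto (fun x : ℝ => (x:ℂ)) (𝓝[>] (0:ℝ)) (𝓝 0) := by
      have := hcoe.tendsto 0
      simpa using this.mono_left nhdsWithin_le_nhds
    have hψ0m : Tendsto (fun x => ψ x s) (𝓝[<] (0:ℝ)) (𝓝 (ψ 0 s)) :=
      ((hreg.contψ s).tendsto 0).mono_left nhdsWithin_le_nhds
    have hx0m : Tendsto (fun x : ℝ => (x:ℂ)) (𝓝[<] (0:ℝ)) (𝓝 0) := by
      have := hcoe.tendsto 0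
      simpa using this.mono_left nhdsWithin_le_nhds
    set q0 : ℝ → ℂ := fun x => 2*(x:ℂ) * ((starRingEnd ℂ) (ψ x s) * ψx x s)
      + ((x:ℂ))^2 * ((starRingEnd ℂ) (ψx x s) * ψx x s + (starRingEnd ℂ) (ψ x s) * ψxx x s)
      with hq0
    have hd0 : ∀ x : ℝ, x ≠ 0 →
        HasDerivAt (fun y : ℝ => ((y:ℂ))^2 * ((starRingEnd ℂ) (ψ y s) * ψx y s)) (q0 x) x := by
      intro x hx
      exact (hasDerivAt_ofReal_sq x).mul (hasDerivAt_conj_mul (h.hx s x hx) (h.hxx s x hx))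
    have hc0 : ContinuousOn q0 {(0:ℝ)}ᶜ := by
      apply ContinuousOn.add
      · exact ((continuous_const.mul hcoe).continuousOn).mul
          ((hcjC.comp_continuousOn (hcψ s)).mul (hcψx s))
      · exact ((hcoe.pow 2).continuousOn).mul
          (((hcjC.comp_continuousOn (hcψx s)).mul (hcψx s)).add
            ((hcjC.comp_continuousOn (hcψ s)).mul (hcψxx s)))
    have hb0' : ∀ x : ℝ, ‖q0 x‖ ≤ 4 * g0 x := by
      intro x
      have e1 : ‖2*(x:ℂ) * ((starRingEnd ℂ) (ψ x s) * ψx x s)‖ ≤ 2 * g0 x := by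
        rw [norm_mul, norm_mul, h2n, hnx]
        calc 2 * |x| * ‖(starRingEnd ℂ) (ψ x s) * ψx x s‖
            ≤ 2 * |x| * (β x * β x) :=
              mul_le_mul_of_nonneg_left (hnorm2 _ _ x (hbψ s x) (hbψx s x)) (by positivity)
          _ = 2 * (|x| * (β x * β x)) := by ring
          _ ≤ 2 * g0 x := by linarith [hxββ x]
      have e3 : ‖(starRingEnd ℂ) (ψx x s) * ψx x s + (starRingEnd ℂ) (ψ x s) * ψxx x s‖
          ≤ β x * β x + β x * β x :=
        le_trans (norm_add_le _ _) (add_le_add (hnorm2 _ _ x (hbψx s x) (hbψx s x))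
          (hnorm2 _ _ x (hbψ s x) (hbψxx s x)))
      have e2 : ‖((x:ℂ))^2 * ((starRingEnd ℂ) (ψx x s) * ψx x s
          + (starRingEnd ℂ) (ψ x s) * ψxx x s)‖ ≤ 2 * g0 x := by
        rw [norm_mul, norm_pow, hnx]
        calc |x|^2 * ‖(starRingEnd ℂ) (ψx x s) * ψx x s + (starRingEnd ℂ) (ψ x s) * ψxx x s‖
            ≤ |x|^2 * (β x * β x + β x * β x) :=
              mul_le_mul_of_nonneg_left e3 (by positivity)
          _ = 2 * (x^2 * (β x * β x)) := by rw [sq_abs]; ring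
          _ ≤ 2 * g0 x := by linarith [hx2ββ x]
      calc ‖q0 x‖ ≤ ‖2*(x:ℂ) * ((starRingEnd ℂ) (ψ x s) * ψx x s)‖
            + ‖((x:ℂ))^2 * ((starRingEnd ℂ) (ψx x s) * ψx x s
              + (starRingEnd ℂ) (ψ x s) * ψxx x s)‖ := norm_add_le _ _
        _ ≤ 2 * g0 x + 2 * g0 x := add_le_add e1 e2
        _ = 4 * g0 x := by ring
    have hb0 : ∀ x : ℝ, 1 ≤ |x| →
        ‖((x:ℂ))^2 * ((starRingEnd ℂ) (ψ x s) * ψx x s)‖ ≤ 4 * g0 x := by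
      intro x _
      rw [norm_mul, norm_pow, hnx]
      calc |x|^2 * ‖(starRingEnd ℂ) (ψ x s) * ψx x s‖
          ≤ |x|^2 * (β x * β x) :=
            mul_le_mul_of_nonneg_left (hnorm2 _ _ x (hbψ s x) (hbψx s x)) (by positivity)
        _ = x^2 * (β x * β x) := by rw [sq_abs]
        _ ≤ g0 x := hx2ββ x
        _ ≤ 4 * g0 x := by linarith [hg00 x]
    have l1p : Tendsto (fun x : ℝ => ((x:ℂ))^2) (𝓝[>] (0:ℝ)) (𝓝 0) := by
      have h1 := hx0p.mul hx0p
      rw [mul_zero] at h1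
      exact Tendsto.congr (fun x => (pow_two ((x:ℂ))).symm) h1
    have l1m : Tendsto (fun x : ℝ => ((x:ℂ))^2) (𝓝[<] (0:ℝ)) (𝓝 0) := by
      have h1 := hx0m.mul hx0m
      rw [mul_zero] at h1
      exact Tendsto.congr (fun x => (pow_two ((x:ℂ))).symm) h1
    have hLp0 : Tendsto (fun x : ℝ => ((x:ℂ))^2 * ((starRingEnd ℂ) (ψ x s) * ψx x s))
        (𝓝[>] (0:ℝ)) (𝓝 0) := by
      have := l1p.mul (((hcjC.tendsto _).comp hψ0p).mul hDp)
      simpa using this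
    have hLm0 : Tendsto (fun x : ℝ => ((x:ℂ))^2 * ((starRingEnd ℂ) (ψ x s) * ψx x s))
        (𝓝[<] (0:ℝ)) (𝓝 0) := by
      have := l1m.mul (((hcjC.tendsto _).comp hψ0m).mul hDm)
      simpa using this
    have hibp0 := key_ibp (hg0i.const_mul 4) hd0 hc0 hb0' hb0 hLp0 hLm0
    have hI1 : Integrable (fun x : ℝ => x * ((starRingEnd ℂ) (ψ x s) * ψx x s).im) := by
      refine hIbaseR _ 1 ?_ ?_
      · exact (continuous_id.continuousOn).mul (Complex.continuous_im.comp_continuousOn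
          ((hcjC.comp_continuousOn (hcψ s)).mul (hcψx s)))
      · intro x
        rw [Real.norm_eq_abs, abs_mul, one_mul]
        calc |x| * |((starRingEnd ℂ) (ψ x s) * ψx x s).im|
            ≤ |x| * (β x * β x) := mul_le_mul_of_nonneg_left
              (le_trans (abs_im_le_norm _) (hnorm2 _ _ x (hbψ s x) (hbψx s x))) (abs_nonneg x)
          _ ≤ g0 x := hxββ x
    have hI2 : Integrable (fun x : ℝ => x^2 * ((starRingEnd ℂ) (ψ x s) * ψxx x s).im) := by
      refine hIbaseR _ 1 ?_ ?_
      · exact ((continuous_pow 2).continuousOn).mul (Complex.continuous_im.comp_continuousOn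
          ((hcjC.comp_continuousOn (hcψ s)).mul (hcψxx s)))
      · intro x
        rw [Real.norm_eq_abs, abs_mul, one_mul, abs_of_nonneg (sq_nonneg x)]
        calc x^2 * |((starRingEnd ℂ) (ψ x s) * ψxx x s).im|
            ≤ x^2 * (β x * β x) := mul_le_mul_of_nonneg_left
              (le_trans (abs_im_le_norm _) (hnorm2 _ _ x (hbψ s x) (hbψxx s x))) (sq_nonneg x)
          _ ≤ g0 x := hx2ββ x
    have h1 : ∫ x : ℝ, (q0 x).im = (0:ℝ) := by
      rw [integral_cim hibp0.1, hibp0.2]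
      simp
    have h2 : (fun x : ℝ => (q0 x).im) = fun x : ℝ =>
        2 * (x * ((starRingEnd ℂ) (ψ x s) * ψx x s).im)
        + x^2 * ((starRingEnd ℂ) (ψ x s) * ψxx x s).im := by
      funext x
      have e : q0 x = ((2*x:ℝ):ℂ) * ((starRingEnd ℂ) (ψ x s) * ψx x s)
          + (((x^2:ℝ)):ℂ) * ((starRingEnd ℂ) (ψx x s) * ψx x s)
          + (((x^2:ℝ)):ℂ) * ((starRingEnd ℂ) (ψ x s) * ψxx x s) := by
        rw [hq0]; push_cast; ring
      rw [e]
      simp only [Complex.add_im, ofReal_mul_im, conj_mul_self_im]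
      ring
    rw [h2] at h1
    rw [integral_add (hI1.const_mul 2) hI2, integral_cmul] at h1
    have hLHS : (∫ x : ℝ, 2 * x ^ 2 * ((starRingEnd ℂ) (ψ x s) * ψt x s).re)
        = ∫ x : ℝ, (-2) * (x^2 * ((starRingEnd ℂ) (ψ x s) * ψxx x s).im) := by
      apply integral_congr_ae
      filter_upwards [hae0] with x hx
      rw [hlaw s x hx]
      have e : (starRingEnd ℂ) (ψ x s) * (Complex.I * ψxx x s)
          = Complex.I * ((starRingEnd ℂ) (ψ x s) * ψxx x s) := by ring
      rw [e, Complex.I_mul_re]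
      ring
    rw [hLHS, integral_cmul]
    have hRHS : (fun x : ℝ => 4 * x * ((starRingEnd ℂ) (ψ x s) * ψx x s).im)
        = fun x : ℝ => 4 * (x * ((starRingEnd ℂ) (ψ x s) * ψx x s).im) := by
      funext x; ring
    rw [hRHS, integral_cmul]
    linarith

  -- the big derivative
  have hGder : ∀ t : ℝ, HasDerivAt (fun s => ∫ x : ℝ, 4 * x * ((starRingEnd ℂ) (ψ x s) * ψx x s).im)
      (8 * (∫ x : ℝ, ‖ψx x t‖ ^ 2) - 4 * ‖ψ 0 t‖ ^ (p+1)) t := by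
    intro t
    obtain ⟨Dp, Dm, hDp, hDm, hjump⟩ := h.jump t
    have hψ0p : Tendsto (fun x => ψ x t) (𝓝[>] (0:ℝ)) (𝓝 (ψ 0 t)) :=
      ((hreg.contψ t).tendsto 0).mono_left nhdsWithin_le_nhds
    have hψ0m : Tendsto (fun x => ψ x t) (𝓝[<] (0:ℝ)) (𝓝 (ψ 0 t)) :=
      ((hreg.contψ t).tendsto 0).mono_left nhdsWithin_le_nhds
    have hx0p : Tendsto (fun x : ℝ => (x:ℂ)) (𝓝[>] (0:ℝ)) (𝓝 0) := by
      have := hcoe.tendsto 0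
      simpa using this.mono_left nhdsWithin_le_nhds
    have hx0m : Tendsto (fun x : ℝ => (x:ℂ)) (𝓝[<] (0:ℝ)) (𝓝 0) := by
      have := hcoe.tendsto 0
      simpa using this.mono_left nhdsWithin_le_nhds
    set A : ℝ := ∫ x : ℝ, ‖ψx x t‖ ^ 2 with hAdef
    set B : ℝ := ‖ψ 0 t‖ ^ (p+1) with hBdef
    have hIA : Integrable (fun x : ℝ => ‖ψx x t‖ ^ 2) := by
      refine hIbaseR _ 1 ?_ ?_
      · exact ((hcψx t).norm).pow 2
      · intro x
        rw [Real.norm_eq_abs, abs_of_nonneg (by positivity), one_mul]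
        calc ‖ψx x t‖ ^ 2 = ‖ψx x t‖ * ‖ψx x t‖ := pow_two _
          _ ≤ β x * β x := mul_le_mul (hbψx t x) (hbψx t x) (norm_nonneg _) (hβ0 x)
          _ ≤ g0 x := hββ x
    have hJa_int : Integrable (fun x : ℝ => ((starRingEnd ℂ) (ψ x t) * ψxx x t).re) := by
      refine hIbaseR _ 1 ?_ ?_
      · exact Complex.continuous_re.comp_continuousOn
          ((hcjC.comp_continuousOn (hcψ t)).mul (hcψxx t))
      · intro x
        rw [Real.norm_eq_abs, one_mul]
        exact le_trans (le_trans (abs_re_le_norm _)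
          (hnorm2 _ _ x (hbψ t x) (hbψxx t x))) (hββ x)
    have hJb_int : Integrable (fun x : ℝ => x * ((starRingEnd ℂ) (ψx x t) * ψxx x t).re) := by
      refine hIbaseR _ 1 ?_ ?_
      · exact (continuous_id.continuousOn).mul (Complex.continuous_re.comp_continuousOn
          ((hcjC.comp_continuousOn (hcψx t)).mul (hcψxx t)))
      · intro x
        rw [Real.norm_eq_abs, abs_mul, one_mul]
        calc |x| * |((starRingEnd ℂ) (ψx x t) * ψxx x t).re|
            ≤ |x| * (β x * β x) := mul_le_mul_of_nonneg_left
              (le_trans (abs_re_le_norm _) (hnorm2 _ _ x (hbψx t x) (hbψxx t x))) (abs_nonneg x)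
          _ ≤ g0 x := hxββ x
    -- IBP (a) : ∫ (conj ψ ψxx).re = B - A
    have hJa : (∫ x : ℝ, ((starRingEnd ℂ) (ψ x t) * ψxx x t).re) = B - A := by
      set q1 : ℝ → ℂ := fun x => (starRingEnd ℂ) (ψx x t) * ψx x t
        + (starRingEnd ℂ) (ψ x t) * ψxx x t with hq1
      have hd1 : ∀ x : ℝ, x ≠ 0 →
          HasDerivAt (fun y : ℝ => (starRingEnd ℂ) (ψ y t) * ψx y t) (q1 x) x :=
        fun x hx => hasDerivAt_conj_mul (h.hx t x hx) (h.hxx t x hx)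
      have hc1 : ContinuousOn q1 {(0:ℝ)}ᶜ :=
        (((hcjC.comp_continuousOn (hcψx t)).mul (hcψx t))).add
          ((hcjC.comp_continuousOn (hcψ t)).mul (hcψxx t))
      have hb1' : ∀ x : ℝ, ‖q1 x‖ ≤ 2 * g0 x := by
        intro x
        calc ‖q1 x‖ ≤ ‖(starRingEnd ℂ) (ψx x t) * ψx x t‖
              + ‖(starRingEnd ℂ) (ψ x t) * ψxx x t‖ := norm_add_le _ _
          _ ≤ β x * β x + β x * β x := add_le_add (hnorm2 _ _ x (hbψx t x) (hbψx t x))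
              (hnorm2 _ _ x (hbψ t x) (hbψxx t x))
          _ ≤ 2 * g0 x := by linarith [hββ x]
      have hb1 : ∀ x : ℝ, 1 ≤ |x| →
          ‖(starRingEnd ℂ) (ψ x t) * ψx x t‖ ≤ 2 * g0 x := by
        intro x _
        calc ‖(starRingEnd ℂ) (ψ x t) * ψx x t‖ ≤ β x * β x :=
              hnorm2 _ _ x (hbψ t x) (hbψx t x)
          _ ≤ g0 x := hββ x
          _ ≤ 2 * g0 x := by linarith [hg00 x]
      have hLp1 : Tendsto (fun x : ℝ => (starRingEnd ℂ) (ψ x t) * ψx x t) (𝓝[>] (0:ℝ))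
          (𝓝 ((starRingEnd ℂ) (ψ 0 t) * Dp)) := ((hcjC.tendsto _).comp hψ0p).mul hDp
      have hLm1 : Tendsto (fun x : ℝ => (starRingEnd ℂ) (ψ x t) * ψx x t) (𝓝[<] (0:ℝ))
          (𝓝 ((starRingEnd ℂ) (ψ 0 t) * Dm)) := ((hcjC.tendsto _).comp hψ0m).mul hDm
      have hibp1 := key_ibp (hg0i.const_mul 2) hd1 hc1 hb1' hb1 hLp1 hLm1
      have h1 : ∫ x : ℝ, (q1 x).re
          = ((starRingEnd ℂ) (ψ 0 t) * Dm - (starRingEnd ℂ) (ψ 0 t) * Dp).re := by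
        rw [integral_cre hibp1.1, hibp1.2]
      have h2 : (fun x : ℝ => (q1 x).re) = fun x : ℝ =>
          ‖ψx x t‖ ^ 2 + ((starRingEnd ℂ) (ψ x t) * ψxx x t).re := by
        funext x
        rw [hq1]
        rw [Complex.add_re, conj_mul_self_re]
      rw [h2, integral_add hIA hJa_int] at h1
      have hjump' : Dm - Dp = ((‖ψ 0 t‖ ^ (p-1) : ℝ) : ℂ) * ψ 0 t := by
        linear_combination -hjump
      have hre2 : ((starRingEnd ℂ) (ψ 0 t) * Dm - (starRingEnd ℂ) (ψ 0 t) * Dp).re = B := by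
        have e : (starRingEnd ℂ) (ψ 0 t) * Dm - (starRingEnd ℂ) (ψ 0 t) * Dp
            = ((‖ψ 0 t‖ ^ (p-1) : ℝ) : ℂ) * ((starRingEnd ℂ) (ψ 0 t) * ψ 0 t) := by
          rw [← mul_sub, hjump']
          ring
        rw [e, ofReal_mul_re, conj_mul_self_re, hBdef]
        rcases eq_or_ne (‖ψ 0 t‖) 0 with h0 | h0
        · rw [h0, Real.zero_rpow (by intro hc; nlinarith), Real.zero_rpow (by intro hc; nlinarith)]
          ring
        · have hpos : 0 < ‖ψ 0 t‖ := lt_of_le_of_ne (norm_nonneg _) (Ne.symm h0)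
          rw [show ‖ψ 0 t‖ ^ 2 = ‖ψ 0 t‖ ^ ((2:ℕ):ℝ) from (Real.rpow_natCast _ 2).symm,
            ← Real.rpow_add hpos]
          norm_num
          congr 1
          ring
      rw [hre2] at h1
      linarith [h1]
    -- IBP (b) : A + 2 * ∫ x (conj ψx ψxx).re = 0
    have hJb2 : A + 2 * (∫ x : ℝ, x * ((starRingEnd ℂ) (ψx x t) * ψxx x t).re) = 0 := by
      set q2 : ℝ → ℂ := fun x => 1 * ((starRingEnd ℂ) (ψx x t) * ψx x t)
        + (x:ℂ) * ((starRingEnd ℂ) (ψxx x t) * ψx x t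
          + (starRingEnd ℂ) (ψx x t) * ψxx x t) with hq2
      have hd2 : ∀ x : ℝ, x ≠ 0 →
          HasDerivAt (fun y : ℝ => (y:ℂ) * ((starRingEnd ℂ) (ψx y t) * ψx y t)) (q2 x) x :=
        fun x hx => (hasDerivAt_ofReal x).mul
          (hasDerivAt_conj_mul (h.hxx t x hx) (h.hxx t x hx))
      have hc2 : ContinuousOn q2 {(0:ℝ)}ᶜ := by
        apply ContinuousOn.add
        · exact (continuous_const.continuousOn).mul
            ((hcjC.comp_continuousOn (hcψx t)).mul (hcψx t))
        · exact (hcoe.continuousOn).mul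
            (((hcjC.comp_continuousOn (hcψxx t)).mul (hcψx t)).add
              ((hcjC.comp_continuousOn (hcψx t)).mul (hcψxx t)))
      have hb2' : ∀ x : ℝ, ‖q2 x‖ ≤ 3 * g0 x := by
        intro x
        have e1 : ‖(1:ℂ) * ((starRingEnd ℂ) (ψx x t) * ψx x t)‖ ≤ g0 x := by
          rw [one_mul]
          exact le_trans (hnorm2 _ _ x (hbψx t x) (hbψx t x)) (hββ x)
        have e2 : ‖(x:ℂ) * ((starRingEnd ℂ) (ψxx x t) * ψx x t
            + (starRingEnd ℂ) (ψx x t) * ψxx x t)‖ ≤ 2 * g0 x := by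
          rw [norm_mul, hnx]
          calc |x| * ‖(starRingEnd ℂ) (ψxx x t) * ψx x t
              + (starRingEnd ℂ) (ψx x t) * ψxx x t‖
              ≤ |x| * (β x * β x + β x * β x) := mul_le_mul_of_nonneg_left
                (le_trans (norm_add_le _ _) (add_le_add
                  (hnorm2 _ _ x (hbψxx t x) (hbψx t x))
                  (hnorm2 _ _ x (hbψx t x) (hbψxx t x)))) (abs_nonneg x)
            _ = 2 * (|x| * (β x * β x)) := by ring
            _ ≤ 2 * g0 x := by linarith [hxββ x]
        calc ‖q2 x‖ ≤ ‖(1:ℂ) * ((starRingEnd ℂ) (ψx x t) * ψx x t)‖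
              + ‖(x:ℂ) * ((starRingEnd ℂ) (ψxx x t) * ψx x t
                + (starRingEnd ℂ) (ψx x t) * ψxx x t)‖ := norm_add_le _ _
          _ ≤ g0 x + 2 * g0 x := add_le_add e1 e2
          _ = 3 * g0 x := by ring
      have hb2 : ∀ x : ℝ, 1 ≤ |x| →
          ‖(x:ℂ) * ((starRingEnd ℂ) (ψx x t) * ψx x t)‖ ≤ 3 * g0 x := by
        intro x _
        rw [norm_mul, hnx]
        calc |x| * ‖(starRingEnd ℂ) (ψx x t) * ψx x t‖
            ≤ |x| * (β x * β x) := mul_le_mul_of_nonneg_left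
              (hnorm2 _ _ x (hbψx t x) (hbψx t x)) (abs_nonneg x)
          _ ≤ g0 x := hxββ x
          _ ≤ 3 * g0 x := by linarith [hg00 x]
      have hLp2 : Tendsto (fun x : ℝ => (x:ℂ) * ((starRingEnd ℂ) (ψx x t) * ψx x t))
          (𝓝[>] (0:ℝ)) (𝓝 0) := by
        have := hx0p.mul (((hcjC.tendsto _).comp hDp).mul hDp)
        simpa using this
      have hLm2 : Tendsto (fun x : ℝ => (x:ℂ) * ((starRingEnd ℂ) (ψx x t) * ψx x t))
          (𝓝[<] (0:ℝ)) (𝓝 0) := by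
        have := hx0m.mul (((hcjC.tendsto _).comp hDm).mul hDm)
        simpa using this
      have hibp2 := key_ibp (hg0i.const_mul 3) hd2 hc2 hb2' hb2 hLp2 hLm2
      have h1 : ∫ x : ℝ, (q2 x).re = 0 := by
        rw [integral_cre hibp2.1, hibp2.2]
        simp
      have h2 : (fun x : ℝ => (q2 x).re) = fun x : ℝ =>
          ‖ψx x t‖ ^ 2 + 2 * (x * ((starRingEnd ℂ) (ψx x t) * ψxx x t).re) := by
        funext x
        simp only [hq2, one_mul, Complex.add_re, conj_mul_self_re, ofReal_mul_re,
          conj_mul_re_symm (ψxx x t) (ψx x t)]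
        ring
      rw [h2, integral_add hIA ((hJb_int.const_mul 2)), integral_cmul] at h1
      linarith [h1]
    -- the complex momentum integrand
    have hIGc : ∀ s : ℝ, Integrable (fun x : ℝ =>
        (x:ℂ) * ((starRingEnd ℂ) (ψ x s) * ψx x s)) := by
      intro s
      refine hIbase _ 1 ?_ ?_
      · exact (hcoe.continuousOn).mul ((hcjC.comp_continuousOn (hcψ s)).mul (hcψx s))
      · intro x
        rw [norm_mul, hnx, one_mul]
        calc |x| * ‖(starRingEnd ℂ) (ψ x s) * ψx x s‖
            ≤ |x| * (β x * β x) := mul_le_mul_of_nonneg_left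
              (hnorm2 _ _ x (hbψ s x) (hbψx s x)) (abs_nonneg x)
          _ ≤ g0 x := hxββ x
    set kk : ℝ → ℂ := fun x => (x:ℂ) * ((starRingEnd ℂ) (ψt x t) * ψx x t)
      - (starRingEnd ℂ) (ψ x t) * ψt x t
      - (x:ℂ) * ((starRingEnd ℂ) (ψx x t) * ψt x t) with hkk
    have hkkint : Integrable kk := by
      refine hIbase _ 3 ?_ ?_
      · refine ContinuousOn.sub (ContinuousOn.sub ?_ ?_) ?_
        · exact (hcoe.continuousOn).mul ((hcjC.comp_continuousOn (hcψt t)).mul (hcψx t))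
        · exact (hcjC.comp_continuousOn (hcψ t)).mul (hcψt t)
        · exact (hcoe.continuousOn).mul ((hcjC.comp_continuousOn (hcψx t)).mul (hcψt t))
      · intro x
        have e1 : ‖(x:ℂ) * ((starRingEnd ℂ) (ψt x t) * ψx x t)‖ ≤ g0 x := by
          rw [norm_mul, hnx]
          calc |x| * ‖(starRingEnd ℂ) (ψt x t) * ψx x t‖
              ≤ |x| * (β x * β x) := mul_le_mul_of_nonneg_left
                (hnorm2 _ _ x (hbψt t x) (hbψx t x)) (abs_nonneg x)
            _ ≤ g0 x := hxββ x
        have e2 : ‖(starRingEnd ℂ) (ψ x t) * ψt x t‖ ≤ g0 x :=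
          le_trans (hnorm2 _ _ x (hbψ t x) (hbψt t x)) (hββ x)
        have e3 : ‖(x:ℂ) * ((starRingEnd ℂ) (ψx x t) * ψt x t)‖ ≤ g0 x := by
          rw [norm_mul, hnx]
          calc |x| * ‖(starRingEnd ℂ) (ψx x t) * ψt x t‖
              ≤ |x| * (β x * β x) := mul_le_mul_of_nonneg_left
                (hnorm2 _ _ x (hbψx t x) (hbψt t x)) (abs_nonneg x)
            _ ≤ g0 x := hxββ x
        calc ‖kk x‖ ≤ ‖(x:ℂ) * ((starRingEnd ℂ) (ψt x t) * ψx x t)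
              - (starRingEnd ℂ) (ψ x t) * ψt x t‖
              + ‖(x:ℂ) * ((starRingEnd ℂ) (ψx x t) * ψt x t)‖ := norm_sub_le _ _
          _ ≤ (‖(x:ℂ) * ((starRingEnd ℂ) (ψt x t) * ψx x t)‖
              + ‖(starRingEnd ℂ) (ψ x t) * ψt x t‖)
              + ‖(x:ℂ) * ((starRingEnd ℂ) (ψx x t) * ψt x t)‖ :=
                add_le_add_left (norm_sub_le _ _) _
          _ ≤ (g0 x + g0 x) + g0 x := add_le_add (add_le_add e1 e2) e3
          _ = 3 * g0 x := by ring
    -- derivative of the complex momentum integral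
    have hGc : HasDerivAt (fun s => ∫ x : ℝ, (x:ℂ) * ((starRingEnd ℂ) (ψ x s) * ψx x s))
        (∫ x : ℝ, kk x) t := by
      rw [hasDerivAt_iff_tendsto_slope]
      set KB : ℝ → ℝ → ℂ := fun t' x =>
        (x:ℂ) * ((starRingEnd ℂ) (ψ x t' - ψ x t) * ψx x t')
        - (starRingEnd ℂ) (ψ x t) * (ψ x t' - ψ x t)
        - (x:ℂ) * ((starRingEnd ℂ) (ψx x t) * (ψ x t' - ψ x t)) with hKB
      have hKBcont : ∀ t', ContinuousOn (KB t') {(0:ℝ)}ᶜ := by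
        intro t'
        refine ContinuousOn.sub (ContinuousOn.sub ?_ ?_) ?_
        · exact (hcoe.continuousOn).mul ((hcjC.comp_continuousOn
            ((hcψ t').sub (hcψ t))).mul (hcψx t'))
        · exact (hcjC.comp_continuousOn (hcψ t)).mul ((hcψ t').sub (hcψ t))
        · exact (hcoe.continuousOn).mul ((hcjC.comp_continuousOn (hcψx t)).mul
            ((hcψ t').sub (hcψ t)))
      have hΔ : ∀ t' x, ‖ψ x t' - ψ x t‖ ≤ β x + β x := fun t' x =>
        le_trans (norm_sub_le _ _) (add_le_add (hbψ t' x) (hbψ t x))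
      have hKBint : ∀ t', Integrable (KB t') := by
        intro t'
        refine hIbase _ 6 (hKBcont t') ?_
        intro x
        have e1 : ‖(x:ℂ) * ((starRingEnd ℂ) (ψ x t' - ψ x t) * ψx x t')‖ ≤ 2 * g0 x := by
          rw [norm_mul, hnx, norm_conj_mul]
          calc |x| * (‖ψ x t' - ψ x t‖ * ‖ψx x t'‖)
              ≤ |x| * ((β x + β x) * β x) := mul_le_mul_of_nonneg_left
                (mul_le_mul (hΔ t' x) (hbψx t' x) (norm_nonneg _)
                  (by positivity)) (abs_nonneg x)
            _ = 2 * (|x| * (β x * β x)) := by ring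
            _ ≤ 2 * g0 x := by linarith [hxββ x]
        have e2 : ‖(starRingEnd ℂ) (ψ x t) * (ψ x t' - ψ x t)‖ ≤ 2 * g0 x := by
          rw [norm_conj_mul]
          calc ‖ψ x t‖ * ‖ψ x t' - ψ x t‖ ≤ β x * (β x + β x) :=
              mul_le_mul (hbψ t x) (hΔ t' x) (norm_nonneg _) (hβ0 x)
            _ = 2 * (β x * β x) := by ring
            _ ≤ 2 * g0 x := by linarith [hββ x]
        have e3 : ‖(x:ℂ) * ((starRingEnd ℂ) (ψx x t) * (ψ x t' - ψ x t))‖ ≤ 2 * g0 x := by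
          rw [norm_mul, hnx, norm_conj_mul]
          calc |x| * (‖ψx x t‖ * ‖ψ x t' - ψ x t‖)
              ≤ |x| * (β x * (β x + β x)) := mul_le_mul_of_nonneg_left
                (mul_le_mul (hbψx t x) (hΔ t' x) (norm_nonneg _) (hβ0 x)) (abs_nonneg x)
            _ = 2 * (|x| * (β x * β x)) := by ring
            _ ≤ 2 * g0 x := by linarith [hxββ x]
        calc ‖KB t' x‖ ≤ (‖(x:ℂ) * ((starRingEnd ℂ) (ψ x t' - ψ x t) * ψx x t')‖
              + ‖(starRingEnd ℂ) (ψ x t) * (ψ x t' - ψ x t)‖)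
              + ‖(x:ℂ) * ((starRingEnd ℂ) (ψx x t) * (ψ x t' - ψ x t))‖ :=
            le_trans (norm_sub_le _ _) (add_le_add_left (norm_sub_le _ _) _)
          _ ≤ (2 * g0 x + 2 * g0 x) + 2 * g0 x := add_le_add (add_le_add e1 e2) e3
          _ = 6 * g0 x := by ring
      have hslope : ∀ t' : ℝ, t' ≠ t →
          slope (fun s => ∫ x : ℝ, (x:ℂ) * ((starRingEnd ℂ) (ψ x s) * ψx x s)) t t'
          = ∫ x : ℝ, (t' - t)⁻¹ • KB t' x := by
        intro t' ht'
        set q3 : ℝ → ℂ := fun x => 1 * ((starRingEnd ℂ) (ψ x t) * (ψ x t' - ψ x t))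
          + (x:ℂ) * ((starRingEnd ℂ) (ψx x t) * (ψ x t' - ψ x t)
            + (starRingEnd ℂ) (ψ x t) * (ψx x t' - ψx x t)) with hq3
        have hd3 : ∀ x : ℝ, x ≠ 0 → HasDerivAt
            (fun y : ℝ => (y:ℂ) * ((starRingEnd ℂ) (ψ y t) * (ψ y t' - ψ y t))) (q3 x) x :=
          fun x hx => (hasDerivAt_ofReal x).mul
            (hasDerivAt_conj_mul (h.hx t x hx) ((h.hx t' x hx).sub (h.hx t x hx)))
        have hc3 : ContinuousOn q3 {(0:ℝ)}ᶜ := by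
          apply ContinuousOn.add
          · exact (continuous_const.continuousOn).mul
              ((hcjC.comp_continuousOn (hcψ t)).mul ((hcψ t').sub (hcψ t)))
          · exact (hcoe.continuousOn).mul
              (((hcjC.comp_continuousOn (hcψx t)).mul ((hcψ t').sub (hcψ t))).add
                ((hcjC.comp_continuousOn (hcψ t)).mul ((hcψx t').sub (hcψx t))))
        have hΔx : ∀ x, ‖ψx x t' - ψx x t‖ ≤ β x + β x := fun x =>
          le_trans (norm_sub_le _ _) (add_le_add (hbψx t' x) (hbψx t x))
        have hb3' : ∀ x : ℝ, ‖q3 x‖ ≤ 8 * g0 x := by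
          intro x
          have e1 : ‖(1:ℂ) * ((starRingEnd ℂ) (ψ x t) * (ψ x t' - ψ x t))‖ ≤ 2 * g0 x := by
            rw [one_mul, norm_conj_mul]
            calc ‖ψ x t‖ * ‖ψ x t' - ψ x t‖ ≤ β x * (β x + β x) :=
                mul_le_mul (hbψ t x) (hΔ t' x) (norm_nonneg _) (hβ0 x)
              _ = 2 * (β x * β x) := by ring
              _ ≤ 2 * g0 x := by linarith [hββ x]
          have e2 : ‖(x:ℂ) * ((starRingEnd ℂ) (ψx x t) * (ψ x t' - ψ x t)
              + (starRingEnd ℂ) (ψ x t) * (ψx x t' - ψx x t))‖ ≤ 4 * g0 x := by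
            rw [norm_mul, hnx]
            have e21 : ‖(starRingEnd ℂ) (ψx x t) * (ψ x t' - ψ x t)
                + (starRingEnd ℂ) (ψ x t) * (ψx x t' - ψx x t)‖
                ≤ β x * (β x + β x) + β x * (β x + β x) := by
              refine le_trans (norm_add_le _ _) (add_le_add ?_ ?_)
              · rw [norm_conj_mul]
                exact mul_le_mul (hbψx t x) (hΔ t' x) (norm_nonneg _) (hβ0 x)
              · rw [norm_conj_mul]
                exact mul_le_mul (hbψ t x) (hΔx x) (norm_nonneg _) (hβ0 x)
            calc |x| * ‖(starRingEnd ℂ) (ψx x t) * (ψ x t' - ψ x t)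
                + (starRingEnd ℂ) (ψ x t) * (ψx x t' - ψx x t)‖
                ≤ |x| * (β x * (β x + β x) + β x * (β x + β x)) :=
                  mul_le_mul_of_nonneg_left e21 (abs_nonneg x)
              _ = 4 * (|x| * (β x * β x)) := by ring
              _ ≤ 4 * g0 x := by linarith [hxββ x]
          calc ‖q3 x‖ ≤ ‖(1:ℂ) * ((starRingEnd ℂ) (ψ x t) * (ψ x t' - ψ x t))‖
                + ‖(x:ℂ) * ((starRingEnd ℂ) (ψx x t) * (ψ x t' - ψ x t)
                  + (starRingEnd ℂ) (ψ x t) * (ψx x t' - ψx x t))‖ := norm_add_le _ _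
            _ ≤ 2 * g0 x + 4 * g0 x := add_le_add e1 e2
            _ ≤ 8 * g0 x := by linarith [hg00 x]
        have hb3 : ∀ x : ℝ, 1 ≤ |x| →
            ‖(x:ℂ) * ((starRingEnd ℂ) (ψ x t) * (ψ x t' - ψ x t))‖ ≤ 8 * g0 x := by
          intro x _
          rw [norm_mul, hnx, norm_conj_mul]
          calc |x| * (‖ψ x t‖ * ‖ψ x t' - ψ x t‖)
              ≤ |x| * (β x * (β x + β x)) := mul_le_mul_of_nonneg_left
                (mul_le_mul (hbψ t x) (hΔ t' x) (norm_nonneg _) (hβ0 x)) (abs_nonneg x)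
            _ = 2 * (|x| * (β x * β x)) := by ring
            _ ≤ 8 * g0 x := by nlinarith [hxββ x, hg00 x]
        have hδψp : Tendsto (fun x : ℝ => ψ x t' - ψ x t) (𝓝[>] (0:ℝ))
            (𝓝 (ψ 0 t' - ψ 0 t)) :=
          (((hreg.contψ t').tendsto 0).mono_left nhdsWithin_le_nhds).sub hψ0p
        have hδψm : Tendsto (fun x : ℝ => ψ x t' - ψ x t) (𝓝[<] (0:ℝ))
            (𝓝 (ψ 0 t' - ψ 0 t)) :=
          (((hreg.contψ t').tendsto 0).mono_left nhdsWithin_le_nhds).sub hψ0m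
        have hLp3 : Tendsto (fun x : ℝ =>
            (x:ℂ) * ((starRingEnd ℂ) (ψ x t) * (ψ x t' - ψ x t))) (𝓝[>] (0:ℝ)) (𝓝 0) := by
          have := hx0p.mul (((hcjC.tendsto _).comp hψ0p).mul hδψp)
          simpa using this
        have hLm3 : Tendsto (fun x : ℝ =>
            (x:ℂ) * ((starRingEnd ℂ) (ψ x t) * (ψ x t' - ψ x t))) (𝓝[<] (0:ℝ)) (𝓝 0) := by
          have := hx0m.mul (((hcjC.tendsto _).comp hψ0m).mul hδψm)
          simpa using this
        have hibp3 := key_ibp (hg0i.const_mul 8) hd3 hc3 hb3' hb3 hLp3 hLm3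
        have hzero : ∫ x : ℝ, q3 x = 0 := by
          rw [hibp3.2, sub_zero]
        have hptw : ∀ x : ℝ, (x:ℂ) * ((starRingEnd ℂ) (ψ x t') * ψx x t')
            - (x:ℂ) * ((starRingEnd ℂ) (ψ x t) * ψx x t) = KB t' x + q3 x := by
          intro x
          rw [hKB, hq3]
          simp only [map_sub]
          ring
        have e1 : (∫ x : ℝ, (x:ℂ) * ((starRingEnd ℂ) (ψ x t') * ψx x t'))
            - (∫ x : ℝ, (x:ℂ) * ((starRingEnd ℂ) (ψ x t) * ψx x t))
            = ∫ x : ℝ, KB t' x := by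
          rw [← integral_sub (hIGc t') (hIGc t)]
          calc (∫ x : ℝ, ((x:ℂ) * ((starRingEnd ℂ) (ψ x t') * ψx x t')
                - (x:ℂ) * ((starRingEnd ℂ) (ψ x t) * ψx x t)))
              = ∫ x : ℝ, (KB t' x + q3 x) :=
                integral_congr_ae (Eventually.of_forall hptw)
            _ = (∫ x : ℝ, KB t' x) + ∫ x : ℝ, q3 x := integral_add (hKBint t') hibp3.1
            _ = ∫ x : ℝ, KB t' x := by rw [hzero, add_zero]
        rw [slope_def_module, e1, ← integral_smul]
      have hev : (fun t' => ∫ x : ℝ, (t' - t)⁻¹ • KB t' x)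
          =ᶠ[𝓝[≠] t] slope (fun s => ∫ x : ℝ, (x:ℂ) * ((starRingEnd ℂ) (ψ x s) * ψx x s)) t := by
        filter_upwards [self_mem_nhdsWithin] with t' ht'
        exact (hslope t' ht').symm
      refine Tendsto.congr' hev ?_
      apply tendsto_integral_filter_of_dominated_convergence (bound := fun x => 3 * g0 x)
      · exact Eventually.of_forall fun t' =>
          aesm_of_contOn ((hKBcont t').fun_const_smul _)
      · filter_upwards [self_mem_nhdsWithin] with t' ht'
        filter_upwards [hae0] with x hx
        have ht'' : t' ≠ t := ht'
        have hδpos : (0:ℝ) < |t' - t| := abs_pos.mpr (sub_ne_zero.mpr ht'')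
        have hMVT : ‖ψ x t' - ψ x t‖ ≤ β x * |t' - t| := by
          have := convex_univ.norm_image_sub_le_of_norm_hasDerivWithin_le
            (f := fun s => ψ x s) (f' := fun s => ψt x s)
            (fun s _ => (h.ht s x hx).hasDerivWithinAt) (fun s _ => hbψt s x)
            (mem_univ t) (mem_univ t')
          simpa [Real.norm_eq_abs] using this
        have hKBn : ‖KB t' x‖ ≤ 3 * g0 x * |t' - t| := by
          have e1 : ‖(x:ℂ) * ((starRingEnd ℂ) (ψ x t' - ψ x t) * ψx x t')‖
              ≤ g0 x * |t' - t| := by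
            rw [norm_mul, hnx, norm_conj_mul]
            calc |x| * (‖ψ x t' - ψ x t‖ * ‖ψx x t'‖)
                ≤ |x| * ((β x * |t' - t|) * β x) := mul_le_mul_of_nonneg_left
                  (mul_le_mul hMVT (hbψx t' x) (norm_nonneg _) (by positivity))
                  (abs_nonneg x)
              _ = (|x| * (β x * β x)) * |t' - t| := by ring
              _ ≤ g0 x * |t' - t| := mul_le_mul_of_nonneg_right (hxββ x) (abs_nonneg _)
          have e2 : ‖(starRingEnd ℂ) (ψ x t) * (ψ x t' - ψ x t)‖ ≤ g0 x * |t' - t| := by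
            rw [norm_conj_mul]
            calc ‖ψ x t‖ * ‖ψ x t' - ψ x t‖ ≤ β x * (β x * |t' - t|) :=
                mul_le_mul (hbψ t x) hMVT (norm_nonneg _) (hβ0 x)
              _ = (β x * β x) * |t' - t| := by ring
              _ ≤ g0 x * |t' - t| := mul_le_mul_of_nonneg_right (hββ x) (abs_nonneg _)
          have e3 : ‖(x:ℂ) * ((starRingEnd ℂ) (ψx x t) * (ψ x t' - ψ x t))‖
              ≤ g0 x * |t' - t| := by
            rw [norm_mul, hnx, norm_conj_mul]
            calc |x| * (‖ψx x t‖ * ‖ψ x t' - ψ x t‖)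
                ≤ |x| * (β x * (β x * |t' - t|)) := mul_le_mul_of_nonneg_left
                  (mul_le_mul (hbψx t x) hMVT (norm_nonneg _) (hβ0 x)) (abs_nonneg x)
              _ = (|x| * (β x * β x)) * |t' - t| := by ring
              _ ≤ g0 x * |t' - t| := mul_le_mul_of_nonneg_right (hxββ x) (abs_nonneg _)
          calc ‖KB t' x‖ ≤ (‖(x:ℂ) * ((starRingEnd ℂ) (ψ x t' - ψ x t) * ψx x t')‖
                + ‖(starRingEnd ℂ) (ψ x t) * (ψ x t' - ψ x t)‖)
                + ‖(x:ℂ) * ((starRingEnd ℂ) (ψx x t) * (ψ x t' - ψ x t))‖ :=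
              le_trans (norm_sub_le _ _) (add_le_add_left (norm_sub_le _ _) _)
            _ ≤ (g0 x * |t' - t| + g0 x * |t' - t|) + g0 x * |t' - t| :=
              add_le_add (add_le_add e1 e2) e3
            _ = 3 * g0 x * |t' - t| := by ring
        rw [norm_smul, norm_inv, Real.norm_eq_abs]
        rw [inv_mul_le_iff₀ hδpos]
        linarith [hKBn]
      · exact hg0i.const_mul 3
      · filter_upwards [hae0] with x hx
        have hsl : Tendsto (fun t' => (t' - t)⁻¹ • (ψ x t' - ψ x t)) (𝓝[≠] t)
            (𝓝 (ψt x t)) := by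
          have h1 := h.ht t x hx
          rw [hasDerivAt_iff_tendsto_slope] at h1
          refine h1.congr fun t' => ?_
          rw [slope_def_module]
        have heqKB : ∀ t' : ℝ, (t' - t)⁻¹ • KB t' x
            = (x:ℂ) * ((starRingEnd ℂ) ((t' - t)⁻¹ • (ψ x t' - ψ x t)) * ψx x t')
              - (starRingEnd ℂ) (ψ x t) * ((t' - t)⁻¹ • (ψ x t' - ψ x t))
              - (x:ℂ) * ((starRingEnd ℂ) (ψx x t) * ((t' - t)⁻¹ • (ψ x t' - ψ x t))) := by
          intro t'
          rw [hKB]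
          simp only [Complex.real_smul, map_mul, map_sub, Complex.conj_ofReal]
          push_cast
          ring
        have hT1 : Tendsto (fun t' => (starRingEnd ℂ) ((t' - t)⁻¹ • (ψ x t' - ψ x t)))
            (𝓝[≠] t) (𝓝 ((starRingEnd ℂ) (ψt x t))) := (hcjC.tendsto _).comp hsl
        have hT2 : Tendsto (fun t' => ψx x t') (𝓝[≠] t) (𝓝 (ψx x t)) :=
          ((hctψx x hx t).tendsto).mono_left nhdsWithin_le_nhds
        have hbig := ((tendsto_const_nhds (x := ((x:ℝ):ℂ))).mul (hT1.mul hT2)).sub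
            ((tendsto_const_nhds (x := (starRingEnd ℂ) (ψ x t))).mul hsl) |>.sub
            ((tendsto_const_nhds (x := ((x:ℝ):ℂ))).mul
              ((tendsto_const_nhds (x := (starRingEnd ℂ) (ψx x t))).mul hsl))
        exact Tendsto.congr (fun t' => (heqKB t').symm) hbig
    -- value of the derivative
    have himk : (∫ x : ℝ, kk x).im = 2 * A - B := by
      rw [← integral_cim hkkint]
      have hptw : ∀ᵐ x : ℝ, (kk x).im
          = (-2) * (x * ((starRingEnd ℂ) (ψx x t) * ψxx x t).re)
            + (-1) * ((starRingEnd ℂ) (ψ x t) * ψxx x t).re := by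
        filter_upwards [hae0] with x hx
        rw [hkk]
        simp only [Complex.sub_im, ofReal_mul_im]
        rw [conj_mul_im_antisymm (ψt x t) (ψx x t), hlaw t x hx]
        have e1 : (starRingEnd ℂ) (ψx x t) * (Complex.I * ψxx x t)
            = Complex.I * ((starRingEnd ℂ) (ψx x t) * ψxx x t) := by ring
        have e2 : (starRingEnd ℂ) (ψ x t) * (Complex.I * ψxx x t)
            = Complex.I * ((starRingEnd ℂ) (ψ x t) * ψxx x t) := by ring
        rw [e1, e2, Complex.I_mul_im, Complex.I_mul_im]
        ring
      rw [integral_congr_ae hptw,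
        integral_add (hJb_int.const_mul (-2)) (hJa_int.const_mul (-1)),
        integral_cmul, integral_cmul, hJa]
      linarith [hJb2]
    -- assemble
    have him : ∀ s : ℝ, (∫ x : ℝ, 4 * x * ((starRingEnd ℂ) (ψ x s) * ψx x s).im)
        = 4 * (∫ x : ℝ, (x:ℂ) * ((starRingEnd ℂ) (ψ x s) * ψx x s)).im := by
      intro s
      have e : (fun x : ℝ => 4 * x * ((starRingEnd ℂ) (ψ x s) * ψx x s).im)
          = fun x : ℝ => 4 * (((x:ℂ) * ((starRingEnd ℂ) (ψ x s) * ψx x s)).im) := by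
        funext x
        rw [ofReal_mul_im]
        ring
      rw [e, integral_cmul, integral_cim (hIGc s)]
    rw [show (fun s => ∫ x : ℝ, 4 * x * ((starRingEnd ℂ) (ψ x s) * ψx x s).im)
        = fun s => 4 * (∫ x : ℝ, (x:ℂ) * ((starRingEnd ℂ) (ψ x s) * ψx x s)).im
      from funext him]
    have h5 : HasDerivAt (fun s => (∫ x : ℝ, (x:ℂ) * ((starRingEnd ℂ) (ψ x s) * ψx x s)).im)
        ((∫ x : ℝ, kk x).im) t := Complex.imCLM.hasFDerivAt.comp_hasDerivAt t hGc
    have h6 := h5.const_mul (4:ℝ)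
    have h7 : 8 * A - 4 * B = 4 * ((∫ x : ℝ, kk x).im) := by rw [himk]; ring
    rw [h7]
    exact h6

  refine ⟨fun s => ∫ x : ℝ, 2 * x ^ 2 * ((starRingEnd ℂ) (ψ x s) * ψt x s).re, hder1, fun t => ?_⟩
  have hp1 : p + 1 ≠ 0 := by linarith
  refine ⟨?_, ?_, ?_⟩
  · rw [show (fun s => ∫ x : ℝ, 2 * x ^ 2 * ((starRingEnd ℂ) (ψ x s) * ψt x s).re)
      = (fun s => ∫ x : ℝ, 4 * x * ((starRingEnd ℂ) (ψ x s) * ψx x s).im) from funext hg1G]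
    exact hGder t
  · field_simp
    ring
  · intro hp3
    subst hp3
    norm_num
    ring
end

section
/- Let p > 3, σ_c = 1/2 - 1/(p-1), and define f(η) = (2(p+1)/(p-3))·((1/2)η² - (2/(p+1))η^{(p+1)/2}) for η ≥ 0. Then f attains its maximum on [0,∞) at η = 1 with f(1) = 1, and for every ψ ∈ H¹(ℝ), M(ψ)^{(1-σ_c)/σ_c} E(ψ) / (M(φ₀)^{(1-σ_c)/σ_c} E(φ₀)) ≥ f(η), where η = ‖ψ‖_{L²}^{(1-σ_c)/σ_c} ‖ψ'‖_{L²} / (‖φ₀‖_{L²}^{(1-σ_c)/σ_c} ‖φ₀'‖_{L²}). -/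
open MeasureTheory

open Set Complex

lemma integrable_conj'_s17 {α : Type*} {m : MeasurableSpace α} {μ : Measure α} {f : α → ℂ}
    (hf : Integrable f μ) : Integrable (fun x => (starRingEnd ℂ) (f x)) μ := by
  refine Integrable.mono' hf.norm (RCLike.continuous_conj.comp_aestronglyMeasurable hf.1) ?_
  filter_upwards with x
  simp

lemma key_identity (ψ ψ' : ℝ → ℂ) (h : IsH1 ψ ψ') (x : ℝ) (hx : 0 ≤ x) :
    ‖ψ x‖^2 - ‖ψ 0‖^2
      = ∫ t in Set.Ioc (0:ℝ) x, 2 * ((starRingEnd ℂ) (ψ t) * ψ' t).re := by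
  obtain ⟨hc, hm', hftc, hint, hint'⟩ := h
  -- local integrability of ψ'
  have hloc : ∀ a b : ℝ, IntegrableOn ψ' (Ioc a b) := by
    intro a b
    have h1 : IntegrableOn (fun t => 1 + ‖ψ' t‖^2) (Ioc a b) volume := by
      refine Integrable.add ?_ hint'.integrableOn
      simp [integrableOn_const, Real.volume_Ioc]
    refine Integrable.mono' h1 hm'.restrict ?_
    filter_upwards with t
    have h2 : (0:ℝ) ≤ ‖ψ' t‖ := norm_nonneg _
    nlinarith [sq_nonneg (‖ψ' t‖ - 1)]
  set μ : Measure ℝ := volume.restrict (Ioc 0 x) with hμ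
  have I : Integrable ψ' μ := hloc 0 x
  set F : ℝ → ℂ := fun t => ψ t - ψ 0 with hFdef
  have hψF : ∀ t, ψ t = ψ 0 + F t := fun t => by simp [hFdef]
  have hFc : Continuous F := hc.sub continuous_const
  have hFI : ∀ t, 0 ≤ t → F t = ∫ s in Ioc (0:ℝ) t, ψ' s := by
    intro t ht
    simp only [hFdef, hftc t, intervalIntegral.integral_of_le ht]
    ring
  -- bound for F on Icc 0 x
  obtain ⟨C, hC⟩ : ∃ C, ∀ t ∈ Icc (0:ℝ) x, ‖F t‖ ≤ C := by
    obtain ⟨C, hC⟩ := (isCompact_Icc (a := (0:ℝ)) (b := x)).exists_bound_of_continuousOn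
      hFc.continuousOn
    exact ⟨C, hC⟩
  have hbd : ∀ᵐ t ∂μ, ‖(starRingEnd ℂ) (F t)‖ ≤ C := by
    rw [hμ, ae_restrict_iff' measurableSet_Ioc]
    filter_upwards with t ht
    simpa using hC t ⟨ht.1.le, ht.2⟩
  have hFm : AEStronglyMeasurable (fun t => (starRingEnd ℂ) (F t)) μ :=
    (RCLike.continuous_conj.comp hFc).aestronglyMeasurable
  have IA : Integrable (fun t => (starRingEnd ℂ) (F t) * ψ' t) μ :=
    Integrable.bdd_mul I hFm hbd
  have hFxbd : ∀ᵐ t ∂μ, ‖(starRingEnd ℂ) (F x - F t)‖ ≤ ‖F x‖ + C := by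
    rw [hμ, ae_restrict_iff' measurableSet_Ioc]
    filter_upwards with t ht
    calc ‖(starRingEnd ℂ) (F x - F t)‖ = ‖F x - F t‖ := RCLike.norm_conj _
      _ ≤ ‖F x‖ + ‖F t‖ := norm_sub_le _ _
      _ ≤ ‖F x‖ + C := by have := hC t ⟨ht.1.le, ht.2⟩; linarith
  have IA2 : Integrable (fun t => ψ' t * (starRingEnd ℂ) (F x - F t)) μ := by
    have : Integrable (fun t => (starRingEnd ℂ) (F x - F t) * ψ' t) μ :=
      Integrable.bdd_mul I
        ((RCLike.continuous_conj.comp (continuous_const.sub hFc)).aestronglyMeasurable) hFxbd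
    simpa [mul_comm] using this
  set A : ℂ := ∫ t, (starRingEnd ℂ) (F t) * ψ' t ∂μ with hA
  -- Fubini step : conj A = ∫ t, ψ' t * conj (F x - F t)
  have conjA : (starRingEnd ℂ) A = ∫ t, ψ' t * (starRingEnd ℂ) (F x - F t) ∂μ := by
    have e1 : (starRingEnd ℂ) A = ∫ t, F t * (starRingEnd ℂ) (ψ' t) ∂μ := by
      rw [hA, ← integral_conj]
      congr 1; funext t; simp [mul_comm]
    -- express as double integral
    have e2 : ∀ t ∈ Ioc (0:ℝ) x, F t * (starRingEnd ℂ) (ψ' t)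
        = ∫ s, (if s ≤ t then ψ' s * (starRingEnd ℂ) (ψ' t) else 0) ∂μ := by
      intro t ht
      have hsub : Ioc (0:ℝ) x ∩ Iic t = Ioc 0 t := by
        rw [Ioc_inter_Iic, inf_eq_right.mpr ht.2]
      rw [hFI t ht.1.le]
      rw [show (∫ s in Ioc (0:ℝ) t, ψ' s) * (starRingEnd ℂ) (ψ' t)
          = ∫ s in Ioc (0:ℝ) t, ψ' s * (starRingEnd ℂ) (ψ' t) from
        (integral_mul_const _ _).symm]
      rw [hμ, ← hsub, ← setIntegral_indicator measurableSet_Iic]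
      congr 1
    have e3 : ∀ t ∈ Ioc (0:ℝ) x, ψ' t * (starRingEnd ℂ) (F x - F t)
        = ∫ s, (if t ≤ s then ψ' t * (starRingEnd ℂ) (ψ' s) else 0) ∂μ := by
      intro t ht
      have hFdiff : F x - F t = ∫ s in Ioc t x, ψ' s := by
        have hu : Ioc (0:ℝ) t ∪ Ioc t x = Ioc 0 x := Ioc_union_Ioc_eq_Ioc ht.1.le ht.2
        have hsplit : (∫ s in Ioc (0:ℝ) x, ψ' s) =
            (∫ s in Ioc (0:ℝ) t, ψ' s) + ∫ s in Ioc t x, ψ' s := by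
          rw [← hu, setIntegral_union (Ioc_disjoint_Ioc_of_le le_rfl) measurableSet_Ioc
            (hloc 0 t) (hloc t x)]
        rw [hFI x hx, hFI t ht.1.le, hsplit]; ring
      have hsub : Ioc (0:ℝ) x ∩ Ici t = Icc t x := by
        ext s
        simp only [mem_inter_iff, mem_Ioc, mem_Ici, mem_Icc]
        constructor
        · rintro ⟨⟨_, h2⟩, h3⟩; exact ⟨h3, h2⟩
        · rintro ⟨h1, h2⟩; exact ⟨⟨lt_of_lt_of_le ht.1 h1, h2⟩, h1⟩
      rw [hFdiff, ← integral_Icc_eq_integral_Ioc, ← integral_conj,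
        show ψ' t * (∫ s in Icc t x, (starRingEnd ℂ) (ψ' s))
          = ∫ s in Icc t x, ψ' t * (starRingEnd ℂ) (ψ' s) from (integral_const_mul _ _).symm]
      rw [hμ, ← hsub, ← setIntegral_indicator measurableSet_Ici]
      congr 1
    -- integrability of the kernel on the product
    have hker : Integrable (Function.uncurry fun t s =>
        (if s ≤ t then ψ' s * (starRingEnd ℂ) (ψ' t) else 0)) (μ.prod μ) := by
      have hbase : Integrable (fun q : ℝ × ℝ => ψ' q.2 * (starRingEnd ℂ) (ψ' q.1))
          (μ.prod μ) := by
        have := (integrable_conj'_s17 I).mul_prod I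
        -- this : Integrable (fun q => conj (ψ' q.1) * ψ' q.2)
        simpa [mul_comm] using this
      have hmeas : MeasurableSet {q : ℝ × ℝ | q.2 ≤ q.1} :=
        measurableSet_le measurable_snd measurable_fst
      have := hbase.indicator hmeas
      refine this.congr ?_
      filter_upwards with q
      simp only [Function.uncurry, Set.indicator_apply, mem_setOf_eq]
    have swap := MeasureTheory.integral_integral_swap hker
    -- swap : ∫ t, ∫ s, if s ≤ t ... ∂μ ∂μ = ∫ s, ∫ t, if s ≤ t ... ∂μ ∂μ
    rw [e1, setIntegral_congr_fun measurableSet_Ioc (fun t ht => e2 t ht),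
      setIntegral_congr_fun measurableSet_Ioc (fun t ht => e3 t ht)]
    calc (∫ t, ∫ s, (if s ≤ t then ψ' s * (starRingEnd ℂ) (ψ' t) else 0) ∂μ ∂μ)
        = ∫ s, ∫ t, (if s ≤ t then ψ' s * (starRingEnd ℂ) (ψ' t) else 0) ∂μ ∂μ := swap
      _ = ∫ t, ∫ s, (if t ≤ s then ψ' t * (starRingEnd ℂ) (ψ' s) else 0) ∂μ ∂μ := rfl
  -- A + conj A = F x * conj (F x)
  have hAA : A + (starRingEnd ℂ) A = F x * (starRingEnd ℂ) (F x) := by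
    rw [conjA, hA, ← integral_add IA IA2]
    have : ∀ t ∈ Ioc (0:ℝ) x,
        (starRingEnd ℂ) (F t) * ψ' t + ψ' t * (starRingEnd ℂ) (F x - F t)
          = ψ' t * (starRingEnd ℂ) (F x) := by
      intro t _
      simp only [map_sub]
      ring
    rw [hμ] at *
    rw [setIntegral_congr_fun measurableSet_Ioc this, integral_mul_const, ← hμ]
    rw [show (∫ t, ψ' t ∂μ) = F x from (hFI x hx).symm]
  -- split B
  have IB0 : Integrable (fun t => (starRingEnd ℂ) (ψ 0) * ψ' t) μ := I.const_mul _
  set B : ℂ := ∫ t, (starRingEnd ℂ) (ψ t) * ψ' t ∂μ with hB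
  have hψpt : ∀ t, (starRingEnd ℂ) (ψ t) * ψ' t
      = (starRingEnd ℂ) (ψ 0) * ψ' t + (starRingEnd ℂ) (F t) * ψ' t := by
    intro t; rw [hψF t, map_add]; ring
  have IB : Integrable (fun t => (starRingEnd ℂ) (ψ t) * ψ' t) μ := by
    refine (IB0.add IA).congr ?_
    filter_upwards with t
    rw [Pi.add_apply, hψpt t]
  have hBsplit : B = (starRingEnd ℂ) (ψ 0) * F x + A := by
    rw [hB]
    have e : (∫ t, (starRingEnd ℂ) (ψ t) * ψ' t ∂μ)
        = ∫ t, ((starRingEnd ℂ) (ψ 0) * ψ' t + (starRingEnd ℂ) (F t) * ψ' t) ∂μ := by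
      congr 1; funext t; exact hψpt t
    rw [e, integral_add IB0 IA, integral_const_mul,
      show (∫ t, ψ' t ∂μ) = F x from (hFI x hx).symm, ← hA]
  have hBB : B + (starRingEnd ℂ) B
      = (starRingEnd ℂ) (ψ 0) * F x + ψ 0 * (starRingEnd ℂ) (F x)
        + F x * (starRingEnd ℂ) (F x) := by
    rw [hBsplit, map_add, map_mul, Complex.conj_conj]
    linear_combination hAA
  have hreal : B + (starRingEnd ℂ) B
      = ((∫ t, 2 * ((starRingEnd ℂ) (ψ t) * ψ' t).re ∂μ : ℝ) : ℂ) := by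
    rw [hB, ← integral_conj, ← integral_add IB (integrable_conj'_s17 IB)]
    simp_rw [Complex.add_conj]
    exact integral_ofReal
  have hnorm : ‖ψ x‖^2 - ‖ψ 0‖^2 = (B + (starRingEnd ℂ) B).re := by
    rw [hBB, hψF x]
    simp only [Complex.sq_norm, Complex.normSq_apply, Complex.add_re,
      Complex.add_im, Complex.mul_re, Complex.mul_im, Complex.conj_re, Complex.conj_im]
    ring
  rw [hnorm, hreal, Complex.ofReal_re, hμ]

lemma le_add_eps' {a b : ℝ} (h : ∀ ε : ℝ, 0 < ε → a ≤ b + ε) : a ≤ b := by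
  by_contra h'
  push_neg at h'
  have := h ((a - b)/2) (by linarith)
  linarith

lemma G_integrable (ψ ψ' : ℝ → ℂ) (hc : Continuous ψ) (hm' : AEStronglyMeasurable ψ' volume)
    (hint : Integrable (fun x => ‖ψ x‖ ^ 2)) (hint' : Integrable (fun x => ‖ψ' x‖ ^ 2)) :
    Integrable (fun t => 2 * (‖ψ t‖ * ‖ψ' t‖)) := by
  refine Integrable.mono' (hint.add hint')
    (((hc.aestronglyMeasurable.norm.mul hm'.norm).const_mul 2)) ?_
  filter_upwards with t
  have h1 := norm_nonneg (ψ t); have h2 := norm_nonneg (ψ' t)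
  rw [Real.norm_of_nonneg (by positivity), Pi.add_apply]
  nlinarith [sq_nonneg (‖ψ t‖ - ‖ψ' t‖)]

lemma half_line (ψ ψ' : ℝ → ℂ) (h : IsH1 ψ ψ') :
    ‖ψ 0‖^2 ≤ ∫ t in Set.Ioi (0:ℝ), 2 * (‖ψ t‖ * ‖ψ' t‖) := by
  obtain ⟨hc, hm', hftc, hint, hint'⟩ := h
  have hG : Integrable (fun t => 2 * (‖ψ t‖ * ‖ψ' t‖)) := G_integrable ψ ψ' hc hm' hint hint'
  refine le_add_eps' fun ε hε => ?_
  obtain ⟨x, hx1, hxε⟩ : ∃ x : ℝ, 1 ≤ x ∧ ‖ψ x‖^2 ≤ ε := by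
    by_contra hcon
    push_neg at hcon
    have hco : IntegrableOn (fun _ : ℝ => ε) (Set.Ici 1) volume := by
      refine Integrable.mono' hint.integrableOn aestronglyMeasurable_const ?_
      rw [ae_restrict_iff' measurableSet_Ici]
      filter_upwards with t ht
      have := (hcon t ht).le
      rw [Real.norm_eq_abs, abs_of_pos hε]
      exact this
    rw [integrableOn_const_iff] at hco
    rcases hco with hco | hco
    · simp at hco; linarith
    · simp [Real.volume_Ici] at hco
  have hkey := key_identity ψ ψ' ⟨hc, hm', hftc, hint, hint'⟩ x (by linarith)
  have h1 : ‖ψ 0‖^2 = ‖ψ x‖^2 - ∫ t in Set.Ioc (0:ℝ) x, 2 * ((starRingEnd ℂ) (ψ t) * ψ' t).re := by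
    linarith
  have h2 : |∫ t in Set.Ioc (0:ℝ) x, 2 * ((starRingEnd ℂ) (ψ t) * ψ' t).re|
      ≤ ∫ t in Set.Ioc (0:ℝ) x, 2 * (‖ψ t‖ * ‖ψ' t‖) := by
    calc |∫ t in Set.Ioc (0:ℝ) x, 2 * ((starRingEnd ℂ) (ψ t) * ψ' t).re|
        ≤ ∫ t in Set.Ioc (0:ℝ) x, |2 * ((starRingEnd ℂ) (ψ t) * ψ' t).re| := by
          have hni := norm_integral_le_integral_norm (μ := volume.restrict (Set.Ioc 0 x))
              (f := fun t => 2 * ((starRingEnd ℂ) (ψ t) * ψ' t).re)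
          simpa only [Real.norm_eq_abs] using hni
      _ ≤ ∫ t in Set.Ioc (0:ℝ) x, 2 * (‖ψ t‖ * ‖ψ' t‖) := by
          refine integral_mono_of_nonneg ?_ hG.integrableOn ?_
          · filter_upwards with t; positivity
          · filter_upwards with t
            have : |((starRingEnd ℂ) (ψ t) * ψ' t).re| ≤ ‖ψ t‖ * ‖ψ' t‖ := by
              calc |((starRingEnd ℂ) (ψ t) * ψ' t).re| ≤ ‖(starRingEnd ℂ) (ψ t) * ψ' t‖ :=
                Complex.abs_re_le_norm _
              _ = ‖ψ t‖ * ‖ψ' t‖ := by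
                  rw [norm_mul]
                  simp
            rw [abs_mul, _root_.abs_two]
            linarith
  have h3 : (∫ t in Set.Ioc (0:ℝ) x, 2 * (‖ψ t‖ * ‖ψ' t‖))
      ≤ ∫ t in Set.Ioi (0:ℝ), 2 * (‖ψ t‖ * ‖ψ' t‖) := by
    refine setIntegral_mono_set hG.integrableOn ?_ ?_
    · filter_upwards with t; positivity
    · exact HasSubset.Subset.eventuallyLE Set.Ioc_subset_Ioi_self
  have h4 := abs_le.mp h2
  linarith

lemma reflect_H1 (ψ ψ' : ℝ → ℂ) (h : IsH1 ψ ψ') :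
    IsH1 (fun x => ψ (-x)) (fun x => -ψ' (-x)) := by
  obtain ⟨hc, hm', hftc, hint, hint'⟩ := h
  have hmp := Measure.measurePreserving_neg (volume : Measure ℝ)
  have hemb : MeasurableEmbedding (fun x : ℝ => -x) :=
    (Homeomorph.neg ℝ).measurableEmbedding
  refine ⟨hc.comp continuous_neg, ?_, ?_, ?_, ?_⟩
  · exact (hm'.comp_quasiMeasurePreserving hmp.quasiMeasurePreserving).neg
  · intro x
    have h1 : (∫ t in (0:ℝ)..x, -ψ' (-t)) = -∫ t in (0:ℝ)..x, ψ' (-t) :=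
      intervalIntegral.integral_neg
    have h2 : (∫ t in (0:ℝ)..x, ψ' (-t)) = ∫ t in (-x)..(0:ℝ), ψ' t := by
      simpa using intervalIntegral.integral_comp_neg (a := (0:ℝ)) (b := x) (fun t => ψ' t)
    have h3 := hftc (-x)
    rw [h1, h2, intervalIntegral.integral_symm]
    simp only [neg_zero]
    rw [h3]
    ring
  · have := (hmp.integrable_comp_emb hemb (g := fun x => ‖ψ x‖^2)).mpr hint
    exact this
  · have := (hmp.integrable_comp_emb hemb (g := fun x => ‖ψ' x‖^2)).mpr hint'
    simpa [Function.comp_def] using this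

lemma gns (ψ ψ' : ℝ → ℂ) (h : IsH1 ψ ψ') :
    ‖ψ 0‖^2 ≤ Real.sqrt (∫ x : ℝ, ‖ψ x‖ ^ 2) * Real.sqrt (∫ x : ℝ, ‖ψ' x‖ ^ 2) := by
  obtain ⟨hc, hm', hftc, hint, hint'⟩ := h
  have hG : Integrable (fun t => 2 * (‖ψ t‖ * ‖ψ' t‖)) := G_integrable ψ ψ' hc hm' hint hint'
  have hhalf1 := half_line ψ ψ' ⟨hc, hm', hftc, hint, hint'⟩
  have hhalf2 := half_line _ _ (reflect_H1 ψ ψ' ⟨hc, hm', hftc, hint, hint'⟩)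
  simp only [neg_zero, norm_neg] at hhalf2
  have h2' : ‖ψ 0‖^2 ≤ ∫ t in Set.Iic (0:ℝ), 2 * (‖ψ t‖ * ‖ψ' t‖) := by
    have := integral_comp_neg_Ioi (0:ℝ) (fun t => 2 * (‖ψ t‖ * ‖ψ' t‖))
    rw [neg_zero] at this
    calc ‖ψ 0‖^2 ≤ ∫ t in Set.Ioi (0:ℝ), 2 * (‖ψ (-t)‖ * ‖ψ' (-t)‖) := hhalf2
      _ = ∫ t in Set.Iic (0:ℝ), 2 * (‖ψ t‖ * ‖ψ' t‖) := this
  have hsplit : (∫ t in Set.Iic (0:ℝ), 2 * (‖ψ t‖ * ‖ψ' t‖))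
      + (∫ t in Set.Ioi (0:ℝ), 2 * (‖ψ t‖ * ‖ψ' t‖))
      = ∫ t : ℝ, 2 * (‖ψ t‖ * ‖ψ' t‖) := by
    have := integral_add_compl (measurableSet_Iic (a := (0:ℝ))) hG
    rwa [Set.compl_Iic] at this
  -- Cauchy-Schwarz
  set A := ∫ x : ℝ, ‖ψ x‖ ^ 2 with hA
  set B := ∫ x : ℝ, ‖ψ' x‖ ^ 2 with hB
  have hA0 : 0 ≤ A := integral_nonneg fun t => by positivity
  have hB0 : 0 ≤ B := integral_nonneg fun t => by positivity
  set sa := Real.sqrt A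
  set sb := Real.sqrt B
  have hsa : 0 ≤ sa := Real.sqrt_nonneg _
  have hsb : 0 ≤ sb := Real.sqrt_nonneg _
  have hsa2 : sa * sa = A := Real.mul_self_sqrt hA0
  have hsb2 : sb * sb = B := Real.mul_self_sqrt hB0
  have hCS : (∫ t : ℝ, 2 * (‖ψ t‖ * ‖ψ' t‖)) ≤ 2 * (sa * sb) := by
    refine le_add_eps' fun ε hε => ?_
    set δ := ε / (sa + sb + 1) with hδh
    have hδ : 0 < δ := div_pos hε (by linarith)
    set c := (sb + δ) / (sa + δ) with hch
    have hc0 : 0 < c := div_pos (by linarith) (by linarith)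
    have hpt : ∀ t : ℝ, 2 * (‖ψ t‖ * ‖ψ' t‖) ≤ c * ‖ψ t‖^2 + ‖ψ' t‖^2 / c := by
      intro t
      have h1 := norm_nonneg (ψ t); have h2 := norm_nonneg (ψ' t)
      have hstep : 2 * (‖ψ t‖ * ‖ψ' t‖) - c * ‖ψ t‖^2 ≤ ‖ψ' t‖^2 / c := by
        rw [le_div_iff₀ hc0]
        nlinarith [sq_nonneg (c * ‖ψ t‖ - ‖ψ' t‖)]
      linarith
    have hint2 : Integrable (fun t => c * ‖ψ t‖^2 + ‖ψ' t‖^2 / c) :=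
      (hint.const_mul c).add (hint'.div_const c)
    have hmono := integral_mono hG hint2 hpt
    have heval : (∫ t : ℝ, (c * ‖ψ t‖^2 + ‖ψ' t‖^2 / c)) = c * A + B / c := by
      rw [integral_add (hint.const_mul c) (hint'.div_const c), integral_const_mul, integral_div]
    rw [heval] at hmono
    have hb1 : c * A ≤ (sb + δ) * sa := by
      rw [hch, div_mul_eq_mul_div, div_le_iff₀ (by linarith)]
      nlinarith [mul_nonneg (mul_nonneg (by linarith : (0:ℝ) ≤ sb + δ) hsa) hδ.le, hsa2]
    have hb2 : B / c ≤ sb * (sa + δ) := by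
      rw [hch, div_div_eq_mul_div, div_le_iff₀ (by linarith)]
      nlinarith [mul_nonneg (mul_nonneg hsb (by linarith : (0:ℝ) ≤ sa + δ)) hδ.le, hsb2]
    have hfudge : δ * (sa + sb) ≤ ε := by
      rw [hδh, div_mul_eq_mul_div, div_le_iff₀ (by linarith)]
      nlinarith [hε.le, hsa, hsb]
    calc (∫ t : ℝ, 2 * (‖ψ t‖ * ‖ψ' t‖)) ≤ c * A + B / c := hmono
      _ ≤ (sb + δ) * sa + sb * (sa + δ) := by linarith
      _ = 2 * (sa * sb) + δ * (sa + sb) := by ring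
      _ ≤ 2 * (sa * sb) + ε := by linarith
  linarith

lemma young_aux (p : ℝ) (hp : 3 < p) (η : ℝ) (hη : 0 ≤ η) :
    (2 * (p+1) / (p-3)) * ((1/2) * η ^ 2 - (2/(p+1)) * η ^ ((p+1)/2)) ≤ 1 := by
  have hp1 : (0:ℝ) < p + 1 := by linarith
  have hp3 : (0:ℝ) < p - 3 := by linarith
  have hcj : ((p+1)/4).HolderConjugate ((p+1)/(p-3)) := by
    rw [Real.holderConjugate_iff_eq_conjExponent (by rw [lt_div_iff₀ (by norm_num)]; linarith)]
    rw [show (p+1)/4 - 1 = (p-3)/4 by ring, div_div_div_cancel_right₀ (by norm_num)]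
  have key := Real.young_inequality_of_nonneg (a := η^2) (b := 1) (by positivity) zero_le_one hcj
  have hrw : (η^2 : ℝ) ^ ((p+1)/4) = η ^ ((p+1)/2) := by
    rw [← Real.rpow_natCast η 2, ← Real.rpow_mul hη]
    norm_num
    ring_nf
  rw [hrw, Real.one_rpow, mul_one] at key
  -- key : η^2 ≤ η^((p+1)/2) / ((p+1)/4) + 1 / ((p+1)/(p-3))
  have h1 : η ^ ((p+1)/2) / ((p+1)/4) = 4 / (p+1) * η ^ ((p+1)/2) := by
    field_simp
  have h2 : (1:ℝ) / ((p+1)/(p-3)) = (p-3)/(p+1) := by field_simp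
  rw [h1, h2] at key
  rw [div_mul_eq_mul_div, div_le_one hp3]
  have hX : 0 ≤ η ^ ((p+1)/2) := Real.rpow_nonneg hη _
  have hkey' : (p+1) * η^2 ≤ 4 * η ^ ((p+1)/2) + (p-3) := by
    have := mul_le_mul_of_nonneg_left key hp1.le
    calc (p+1) * η^2 ≤ (p+1) * (4/(p+1) * η^((p+1)/2) + (p-3)/(p+1)) := this
      _ = 4 * η ^ ((p+1)/2) + (p-3) := by field_simp
  have expand : 2 * (p+1) * ((1/2) * η^2 - 2/(p+1) * η^((p+1)/2))
      = (p+1)*η^2 - 4 * η^((p+1)/2) := by field_simp; ring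
  rw [expand]
  linarith

lemma f_one (p : ℝ) (hp : 3 < p) :
    (2 * (p+1) / (p-3)) * ((1/2) * (1:ℝ) ^ 2 - (2/(p+1)) * (1:ℝ) ^ ((p+1)/2)) = 1 := by
  rw [Real.one_rpow, one_pow]
  have hp1 : (p:ℝ) + 1 ≠ 0 := by linarith
  have hp3 : (p:ℝ) - 3 ≠ 0 := by linarith
  field_simp
  ring

lemma alg (p : ℝ) (hp : 3 < p) (M K P : ℝ) (hM : 0 ≤ M) (hK : 0 ≤ K) (hP0 : 0 ≤ P)
    (hP : P ^ 2 ≤ Real.sqrt M * Real.sqrt K) (f : ℝ → ℝ)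
    (hf : ∀ η : ℝ, 0 ≤ η →
      f η = (2 * (p+1) / (p-3)) * ((1/2) * η ^ 2 - (2/(p+1)) * η ^ ((p+1)/2))) :
    f ((Real.sqrt M ^ ((p+1)/(p-3)) * Real.sqrt K) /
        (((2:ℝ) ^ ((1:ℝ)/(p-1))) ^ ((p+1)/(p-3)) * (2:ℝ) ^ ((1:ℝ)/(p-1)))) ≤
      (M ^ ((p+1)/(p-3)) * ((1/2) * K - (1/(p+1)) * P ^ (p+1))) /
        (((2:ℝ) ^ ((2:ℝ)/(p-1))) ^ ((p+1)/(p-3)) *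
          ((2:ℝ) ^ ((2:ℝ)/(p-1)) * (p-3) / (2 * (p+1)))) := by
  have hp1 : (0:ℝ) < p + 1 := by linarith
  have hp3 : (0:ℝ) < p - 3 := by linarith
  have hpm : (0:ℝ) < p - 1 := by linarith
  set r : ℝ := (p+1)/(p-3) with hrdef
  set a : ℝ := 1/(p-1) with hadef
  have hr : 0 < r := div_pos hp1 hp3
  set S := Real.sqrt M with hSdef
  set T := Real.sqrt K with hTdef
  have hS : 0 ≤ S := Real.sqrt_nonneg _
  have hT : 0 ≤ T := Real.sqrt_nonneg _
  have h2 : (0:ℝ) < 2 := two_pos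
  -- d = 2^(a r + a)
  have hcr : ((2:ℝ) ^ a) ^ r = (2:ℝ) ^ (a * r) := (Real.rpow_mul (by norm_num) a r).symm
  have hd : ((2:ℝ) ^ a) ^ r * (2:ℝ) ^ a = (2:ℝ) ^ (a * r + a) := by
    rw [hcr, ← Real.rpow_add h2]
  set d : ℝ := (2:ℝ) ^ (a * r + a) with hddef
  have hd0 : (0:ℝ) < d := Real.rpow_pos_of_pos h2 _
  have hexp : a * r + a = 2 / (p - 3) := by
    rw [hadef, hrdef]; field_simp; ring
  have hd2 : d ^ ((p-3)/2) = 2 := by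
    rw [hddef, hexp, ← Real.rpow_mul (by norm_num)]
    rw [show (2:ℝ)/(p-3) * ((p-3)/2) = 1 by field_simp]
    exact Real.rpow_one 2
  set η : ℝ := S ^ r * T / d with hηdef
  have hη : 0 ≤ η := by positivity
  have hηeq : (S ^ r * T) / (((2:ℝ) ^ a) ^ r * (2:ℝ) ^ a) = η := by rw [hd]
  rw [hηeq, hf η hη]
  -- denominator equality
  have hden : ((2:ℝ)^((2:ℝ)/(p-1)))^r * ((2:ℝ)^((2:ℝ)/(p-1)) * (p-3)/(2*(p+1)))
      = d^2 * ((p-3)/(2*(p+1))) := by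
    have e1 : ((2:ℝ)^((2:ℝ)/(p-1)))^r * (2:ℝ)^((2:ℝ)/(p-1)) = d^2 := by
      rw [← Real.rpow_mul (by norm_num : (0:ℝ) ≤ 2), ← Real.rpow_add h2, hddef,
        ← Real.rpow_natCast ((2:ℝ) ^ (a*r+a)) 2, ← Real.rpow_mul (by norm_num : (0:ℝ) ≤ 2)]
      congr 1
      rw [hadef]
      push_cast
      field_simp
    rw [← e1]; ring
  rw [hden]
  -- rewrite RHS
  set E : ℝ := (1/2) * K - (1/(p+1)) * P ^ (p+1) with hEdef
  have hrhs : M ^ r * E / (d^2 * ((p-3)/(2*(p+1))))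
      = (2 * (p+1) / (p-3)) * (M ^ r * E / d^2) := by
    field_simp
  rw [hrhs]
  have hCpos : 0 ≤ 2 * (p+1) / (p-3) := by positivity
  refine mul_le_mul_of_nonneg_left ?_ hCpos
  -- core inequality
  set e : ℝ := (p+1)/2 with hedef
  have he : 0 ≤ e := by positivity
  have hMr : M ^ r = S ^ ((2:ℝ) * r) := by
    rw [hSdef, ← Real.sq_sqrt hM, ← Real.rpow_natCast (Real.sqrt M) 2,
      ← Real.rpow_mul (Real.sqrt_nonneg M)]
    norm_num
  have hη2 : η ^ (2:ℕ) = M ^ r * K / d ^ (2:ℕ) := by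
    rw [hηdef, div_pow, mul_pow, hMr, ← Real.rpow_natCast (S ^ r) 2,
      ← Real.rpow_mul hS, hTdef, Real.sq_sqrt hK]
    ring_nf
  -- step 1 : P^(p+1) ≤ (S*T)^e
  have hstep1 : P ^ (p+1) ≤ (S * T) ^ e := by
    have h1 : P ^ (p+1) = (P ^ (2:ℕ)) ^ e := by
      rw [← Real.rpow_natCast P 2, ← Real.rpow_mul hP0]
      congr 1
      rw [hedef]; push_cast; ring
    rw [h1]
    exact Real.rpow_le_rpow (by positivity) hP he
  -- X = S^(r*e) * T^e
  set X : ℝ := S ^ (r * e) * T ^ e with hXdef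
  have hkey1 : M ^ r * P ^ (p+1) ≤ X := by
    calc M ^ r * P ^ (p+1) ≤ M ^ r * (S * T) ^ e := by
          refine mul_le_mul_of_nonneg_left hstep1 ?_
          rw [hMr]; positivity
      _ = X := by
          rw [hMr, Real.mul_rpow hS hT, hXdef, ← mul_assoc, ← Real.rpow_add' hS]
          · congr 2
            rw [hrdef, hedef]; field_simp; ring
          · rw [hedef]; positivity
  have hηe : η ^ e = X / (d ^ (2:ℕ) * 2) := by
    rw [hηdef, Real.div_rpow (by positivity) hd0.le, Real.mul_rpow (by positivity) hT,
      ← Real.rpow_mul hS]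
    have hde : d ^ e = d ^ (2:ℕ) * 2 := by
      rw [← hd2, ← Real.rpow_natCast d 2, ← Real.rpow_add hd0]
      congr 1
      rw [hedef]; push_cast; ring
    rw [hde, hXdef]
  -- conclude
  have hkey : M ^ r * P ^ (p+1) / d ^ (2:ℕ) ≤ 2 * η ^ e := by
    rw [hηe]
    rw [div_le_iff₀ (by positivity)]
    have : 2 * (X / (d ^ (2:ℕ) * 2)) * d ^ (2:ℕ) = X := by
      field_simp
    rw [this]
    exact hkey1
  have hfinal : (1/(p+1)) * (M ^ r * P ^ (p+1) / d ^ (2:ℕ)) ≤ (2/(p+1)) * η ^ e := by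
    have h1 : (0:ℝ) ≤ 1/(p+1) := by positivity
    calc (1/(p+1)) * (M ^ r * P ^ (p+1) / d ^ (2:ℕ)) ≤ (1/(p+1)) * (2 * η ^ e) :=
          mul_le_mul_of_nonneg_left hkey h1
      _ = (2/(p+1)) * η ^ e := by ring
  have hEexp : M ^ r * E / d ^ (2:ℕ)
      = (1/2) * (M ^ r * K / d ^ (2:ℕ)) - (1/(p+1)) * (M ^ r * P ^ (p+1) / d ^ (2:ℕ)) := by
    rw [hEdef]; ring
  rw [hEexp, ← hη2]
  linarith

/-- For `p > 3` (so `σ_c = 1/2 - 1/(p-1)` and `(1-σ_c)/σ_c = (p+1)/(p-3)`), the function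
`f(η) = (2(p+1)/(p-3))((1/2)η² - (2/(p+1))η^{(p+1)/2})` attains its maximum `1` on
`[0,∞)` at `η = 1`, and for every `ψ ∈ H¹(ℝ)`,
`M(ψ)^{(1-σ_c)/σ_c} E(ψ) / (M(φ₀)^{(1-σ_c)/σ_c} E(φ₀)) ≥ f(η)` where
`η = ‖ψ‖_{L²}^{(1-σ_c)/σ_c}‖ψ'‖_{L²} / (‖φ₀‖_{L²}^{(1-σ_c)/σ_c}‖φ₀'‖_{L²})`; here
`‖φ₀‖_{L²} = ‖φ₀'‖_{L²} = 2^{1/(p-1)}` and `E(φ₀) = 2^{2/(p-1)}(p-3)/(2(p+1))` for the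
ground state `φ₀(x) = 2^{1/(p-1)}e^{-|x|}`. -/
theorem stmt17 (p : ℝ) (hp : 3 < p) (f : ℝ → ℝ)
    (hf : ∀ η : ℝ, 0 ≤ η →
      f η = (2 * (p+1) / (p-3)) * ((1/2) * η ^ 2 - (2/(p+1)) * η ^ ((p+1)/2))) :
    (∀ η : ℝ, 0 ≤ η → f η ≤ 1) ∧ f 1 = 1 ∧
    ∀ ψ ψ' : ℝ → ℂ, IsH1 ψ ψ' →
      f ((Real.sqrt (∫ x : ℝ, ‖ψ x‖ ^ 2) ^ ((p+1)/(p-3)) *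
            Real.sqrt (∫ x : ℝ, ‖ψ' x‖ ^ 2)) /
          (((2:ℝ) ^ ((1:ℝ)/(p-1))) ^ ((p+1)/(p-3)) * (2:ℝ) ^ ((1:ℝ)/(p-1)))) ≤
        ((∫ x : ℝ, ‖ψ x‖ ^ 2) ^ ((p+1)/(p-3)) *
            ((1/2) * (∫ x : ℝ, ‖ψ' x‖ ^ 2) - (1/(p+1)) * ‖ψ 0‖ ^ (p+1))) /
          (((2:ℝ) ^ ((2:ℝ)/(p-1))) ^ ((p+1)/(p-3)) *
            ((2:ℝ) ^ ((2:ℝ)/(p-1)) * (p-3) / (2 * (p+1)))) := by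
  refine ⟨fun η hη => ?_, ?_, fun ψ ψ' hH1 => ?_⟩
  · rw [hf η hη]
    exact young_aux p hp η hη
  · rw [hf 1 zero_le_one]
    exact f_one p hp
  · have hM : 0 ≤ ∫ x : ℝ, ‖ψ x‖ ^ 2 := integral_nonneg fun t => by positivity
    have hK : 0 ≤ ∫ x : ℝ, ‖ψ' x‖ ^ 2 := integral_nonneg fun t => by positivity
    exact alg p hp _ _ _ hM hK (norm_nonneg _) (gns ψ ψ' hH1) f hf
end

section
/- For every ε > 0 there exists δ > 0 such that: if v ∈ H¹(ℝ) satisfies | ‖v'‖_{L²} - ‖φ₀'‖_{L²} | ≤ δ, | ‖v‖_{L²} - ‖φ₀‖_{L²} | ≤ δ, and | |v(0)| - |φ₀(0)| | ≤ δ, then there exists θ ∈ ℝ with ‖v - e^{iθ}φ₀‖_{H¹} ≤ ε. -/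
open MeasureTheory

section Aux
open Set

noncomputable def ph (x : ℝ) : ℝ := Real.sqrt 2 * Real.exp (-|x|)

lemma ph_cont : Continuous ph :=
  continuous_const.mul (Real.continuous_exp.comp continuous_abs.neg)

lemma ph_nonneg (x : ℝ) : 0 ≤ ph x :=
  mul_nonneg (Real.sqrt_nonneg 2) (Real.exp_pos _).le

lemma integrable_comp_abs {f : ℝ → ℝ} (hm : Continuous f)
    (hf : IntegrableOn f (Ioi 0)) : Integrable (fun x => f |x|) := by
  have int_Ioi : IntegrableOn (fun x => f |x|) (Ioi 0) := by
    refine hf.congr_fun (fun x hx => ?_) measurableSet_Ioi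
    rw [abs_of_pos hx]
  have int_Iic : IntegrableOn (fun x ↦ f |x|) (Iic 0) := by
    rw [← Measure.map_neg_eq_self (volume : Measure ℝ)]
    have m : MeasurableEmbedding fun x : ℝ => -x := (Homeomorph.neg ℝ).measurableEmbedding
    rw [m.integrableOn_map_iff]
    simp_rw [Function.comp_def, abs_neg, neg_preimage, neg_Iic, neg_zero]
    have : IntegrableOn (fun x => f |x|) (Ici 0) := by
      rw [integrableOn_Ici_iff_integrableOn_Ioi]; exact int_Ioi
    exact this
  have := int_Iic.union int_Ioi
  rwa [Set.Iic_union_Ioi, integrableOn_univ] at this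

lemma integrable_exp_neg_mul_abs {b : ℝ} (hb : 0 < b) :
    Integrable (fun x : ℝ => Real.exp (-(b * |x|))) := by
  exact integrable_comp_abs (f := fun y => Real.exp (-(b * y))) (by continuity) (by
      simpa [neg_mul] using exp_neg_integrableOn_Ioi 0 hb)

lemma integral_exp_neg_mul_abs {b : ℝ} (hb : 0 < b) :
    ∫ x : ℝ, Real.exp (-(b * |x|)) = 2 / b := by
  rw [show (fun x : ℝ => Real.exp (-(b * |x|))) = fun x => (fun y => Real.exp (-(b*y))) |x| by
    funext x; rfl]
  rw [integral_comp_abs (f := fun y => Real.exp (-(b*y)))]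
  have := integral_comp_mul_left_Ioi (fun y => Real.exp (-y)) 0 hb
  simp only [mul_zero] at this
  rw [show (fun x : ℝ => Real.exp (-(b * x))) = fun x => (fun y => Real.exp (-y)) (b*x) by
    funext x; rfl, this, integral_exp_neg_Ioi_zero]
  simp [smul_eq_mul]
  ring

lemma integrable_ph : Integrable ph := by
  have := (integrable_exp_neg_mul_abs (b := 1) one_pos).const_mul (Real.sqrt 2)
  exact (by simpa [one_mul] using this : Integrable (fun x => Real.sqrt 2 * Real.exp (-|x|)))

lemma integral_ph : ∫ x : ℝ, ph x = 2 * Real.sqrt 2 := by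
  rw [show ph = fun x => Real.sqrt 2 * Real.exp (-(1 * |x|)) by funext x; simp [ph]]
  rw [integral_const_mul, integral_exp_neg_mul_abs one_pos]
  ring

lemma ph_sq (x : ℝ) : ph x ^ 2 = 2 * Real.exp (-(2 * |x|)) := by
  rw [ph, mul_pow, Real.sq_sqrt (by norm_num : (0:ℝ) ≤ 2), ← Real.exp_nat_mul]
  ring_nf

lemma integrable_ph_sq : Integrable (fun x => ph x ^ 2) := by
  have := (integrable_exp_neg_mul_abs (b := 2) two_pos).const_mul 2
  refine this.congr ?_
  filter_upwards with x
  rw [ph_sq]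

lemma integral_ph_sq : ∫ x : ℝ, ph x ^ 2 = 2 := by
  simp_rw [ph_sq]
  rw [integral_const_mul, integral_exp_neg_mul_abs two_pos]
  norm_num

lemma ph_even (x : ℝ) : ph (-x) = ph x := by simp [ph]

lemma tail_Ioi {t : ℝ} (ht : 0 ≤ t) : ∫ x in Ioi t, ph x = ph t := by
  have h1 : ∫ x in Ioi t, ph x = ∫ x in Ioi t, Real.sqrt 2 * Real.exp (-x) := by
    refine setIntegral_congr_fun measurableSet_Ioi (fun x hx => ?_)
    rw [ph, abs_of_pos (lt_of_le_of_lt ht hx)]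
  rw [h1, integral_const_mul, integral_exp_neg_Ioi, ph, abs_of_nonneg ht]

lemma tail_Iio {t : ℝ} (ht : t ≤ 0) : ∫ x in Iio t, ph x = ph t := by
  have h2 : ∫ x in Iio t, ph x = ∫ x in Iic t, ph x :=
    (integral_Iic_eq_integral_Iio).symm
  have h3 : ∫ x in Ioi (-t), ph (-x) = ∫ x in Iic t, ph x := by
    simpa using integral_comp_neg_Ioi (-t) ph
  rw [h2, ← h3]
  simp_rw [ph_even]
  rw [tail_Ioi (by linarith), ph_even]

noncomputable def ps (x : ℝ) : ℝ := -(Real.sign x) * Real.sqrt 2 * Real.exp (-|x|)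

lemma measurable_sign : Measurable Real.sign := by
  have : Real.sign = fun r : ℝ => if r < 0 then (-1:ℝ) else if 0 < r then 1 else 0 :=
    funext fun r => rfl
  rw [this]
  refine Measurable.ite (measurableSet_lt measurable_id measurable_const) measurable_const ?_
  exact Measurable.ite (measurableSet_lt measurable_const measurable_id) measurable_const
    measurable_const

lemma measurable_ps : Measurable ps :=
  ((measurable_sign.neg.mul measurable_const).mul
    (Real.continuous_exp.comp continuous_abs.neg).measurable)

lemma ps_eq (x : ℝ) : ps x = -(Real.sign x) * ph x := by rw [ps, ph]; ring

lemma ps_sq_ae : (fun x => ph x ^ 2) =ᵐ[volume] fun x => ps x ^ 2 := by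
  have h0 : ∀ᵐ x : ℝ, x ≠ (0:ℝ) := by
    rw [ae_iff]
    simpa using measure_singleton (0:ℝ)
  filter_upwards [h0] with x hx
  rcases lt_or_gt_of_ne hx with h | h
  · rw [ps_eq, Real.sign_of_neg h]; ring
  · rw [ps_eq, Real.sign_of_pos h]; ring

lemma integrable_ps_sq : Integrable (fun x => ps x ^ 2) :=
  integrable_ph_sq.congr ps_sq_ae

lemma integral_ps_sq : ∫ x : ℝ, ps x ^ 2 = 2 := by
  rw [← integral_congr_ae ps_sq_ae, integral_ph_sq]

lemma abs_ps_le (x : ℝ) : |ps x| ≤ ph x := by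
  rw [ps_eq, abs_mul, ph]
  have hn : (0:ℝ) ≤ Real.sqrt 2 * Real.exp (-|x|) := ph_nonneg x
  rcases Real.sign_apply_eq x with h | h | h <;>
    simp [h, abs_of_nonneg hn, hn]

lemma intg_ph_mul_max : Integrable (fun x => ph x * max x 0) := by
  have hIoi : IntegrableOn (fun x => ph x * max x 0) (Ioi 0) := by
    have h : IntegrableOn (fun x => Real.sqrt 2 * (Real.exp (-x) * x ^ ((2:ℝ) - 1))) (Ioi 0) :=
      (Real.GammaIntegral_convergent (by norm_num : (0:ℝ) < 2)).const_mul (Real.sqrt 2)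
    refine h.congr_fun (fun x hx => ?_) measurableSet_Ioi
    rw [show (2:ℝ) - 1 = 1 by norm_num]; beta_reduce; rw [Real.rpow_one, ph, abs_of_pos hx, max_eq_left hx.le]
    ring
  have hIic : IntegrableOn (fun x => ph x * max x 0) (Iic 0) := by
    have h0 : IntegrableOn (fun _ : ℝ => (0:ℝ)) (Iic 0) := integrableOn_zero
    refine h0.congr_fun (fun x hx => ?_) measurableSet_Iic
    rw [max_eq_right (show x ≤ 0 from hx), mul_zero]
  have := hIic.union hIoi
  rwa [Set.Iic_union_Ioi, integrableOn_univ] at this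


lemma const_intOn (a b : ℝ) : IntegrableOn (fun _ : ℝ => (1:ℝ)) (Ioc a b) :=
  integrableOn_const measure_Ioc_lt_top.ne

section swap
variable {w : ℝ → ℂ} (hwm : AEStronglyMeasurable w volume)
  (hwi : Integrable (fun x => ‖w x‖ ^ 2))
include hwm hwi

lemma w_intOn (a b : ℝ) : IntegrableOn w (Ioc a b) := by
  have hb : IntegrableOn (fun x => (1 + ‖w x‖ ^ 2) / 2) (Ioc a b) :=
    ((const_intOn a b).add hwi.restrict).div_const 2
  refine Integrable.mono hb hwm.restrict (Filter.Eventually.of_forall fun x => ?_)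
  have h1 : (0:ℝ) ≤ (1 + ‖w x‖ ^ 2) / 2 := by positivity
  rw [Real.norm_eq_abs, abs_of_nonneg h1]
  nlinarith [norm_nonneg (w x), sq_nonneg (1 - ‖w x‖)]

noncomputable def F1 (w : ℝ → ℂ) : ℝ × ℝ → ℂ :=
  fun p => (ph p.1 : ℂ) * (Ioc (0:ℝ) p.1).indicator w p.2

lemma meas_F1 : AEStronglyMeasurable (F1 w) (volume.prod volume) := by
  have hS : MeasurableSet {p : ℝ × ℝ | 0 < p.2 ∧ p.2 ≤ p.1} :=
    (measurableSet_lt measurable_const measurable_snd).inter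
      (measurableSet_le measurable_snd measurable_fst)
  have heq : F1 w = fun p : ℝ × ℝ =>
      (ph p.1 : ℂ) * ({p : ℝ × ℝ | 0 < p.2 ∧ p.2 ≤ p.1}.indicator
        (fun q : ℝ × ℝ => w q.2) p) := by
    funext p
    by_cases h : p.2 ∈ Ioc (0:ℝ) p.1
    · rw [F1, Set.indicator_of_mem h, Set.indicator_of_mem (by exact h)]
    · rw [F1, Set.indicator_of_notMem h, Set.indicator_of_notMem (by exact h)]
  rw [heq]
  exact ((Complex.continuous_ofReal.comp (ph_cont.comp continuous_fst)).aestronglyMeasurable).mul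
    ((hwm.comp_snd).indicator hS)

lemma intOn_le_max (x : ℝ) : (∫ t in Ioc (0:ℝ) x, ‖w t‖) ≤ (max x 0 + ∫ t : ℝ, ‖w t‖ ^ 2) / 2 := by
  have hb : (∫ t in Ioc (0:ℝ) x, ‖w t‖) ≤ ∫ t in Ioc (0:ℝ) x, (1 + ‖w t‖ ^ 2) / 2 := by
    refine setIntegral_mono_on (w_intOn hwm hwi 0 x).norm
      (((const_intOn 0 x).add hwi.restrict).div_const 2)
      measurableSet_Ioc fun t _ => ?_
    nlinarith [norm_nonneg (w t), sq_nonneg (1 - ‖w t‖)]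
  have hsplit : (∫ t in Ioc (0:ℝ) x, (1 + ‖w t‖ ^ 2) / 2)
      = ((∫ t in Ioc (0:ℝ) x, (1:ℝ)) + ∫ t in Ioc (0:ℝ) x, ‖w t‖ ^ 2) / 2 := by
    rw [integral_div, integral_add (const_intOn 0 x) hwi.restrict]
  have hone : (∫ t in Ioc (0:ℝ) x, (1:ℝ)) ≤ max x 0 := by
    rw [setIntegral_const, smul_eq_mul, mul_one, measureReal_def, Real.volume_Ioc, sub_zero]
    rcases le_or_gt 0 x with h | h
    · rw [ENNReal.toReal_ofReal h]; exact le_max_left _ _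
    · rw [ENNReal.ofReal_of_nonpos h.le]; simp [le_max_iff]
  have hM2 : (∫ t in Ioc (0:ℝ) x, ‖w t‖ ^ 2) ≤ ∫ t : ℝ, ‖w t‖ ^ 2 :=
    setIntegral_le_integral hwi (Filter.Eventually.of_forall fun t => by positivity)
  linarith

lemma intg_F1 : Integrable (F1 w) (volume.prod volume) := by
  rw [integrable_prod_iff (meas_F1 hwm hwi)]
  constructor
  · refine Filter.Eventually.of_forall fun x => ?_
    have := ((w_intOn hwm hwi 0 x).integrable_indicator measurableSet_Ioc).const_mul
      ((ph x : ℂ))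
    exact this.congr (Filter.Eventually.of_forall fun t => rfl)
  · have hnorm : ∀ x : ℝ, (∫ t, ‖F1 w (x, t)‖) = ph x * ∫ t in Ioc (0:ℝ) x, ‖w t‖ := by
      intro x
      have hpt : ∀ t : ℝ, ‖F1 w (x, t)‖ = ph x * (Ioc (0:ℝ) x).indicator (fun t => ‖w t‖) t := by
        intro t
        rw [F1, norm_mul, Complex.norm_real, Real.norm_eq_abs, abs_of_nonneg (ph_nonneg x),
          norm_indicator_eq_indicator_norm]
      simp_rw [hpt]
      rw [integral_const_mul, integral_indicator measurableSet_Ioc]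
    have hMnn : (0:ℝ) ≤ ∫ t : ℝ, ‖w t‖ ^ 2 := integral_nonneg fun t => by positivity
    refine Integrable.mono (g := fun x => ph x * ((max x 0 + ∫ t : ℝ, ‖w t‖ ^ 2) / 2)) ?_
      ((meas_F1 hwm hwi).norm.integral_prod_right') (Filter.Eventually.of_forall fun x => ?_)
    · have hI : Integrable (fun x => ph x * (max x 0) / 2 + ph x * ((∫ t : ℝ, ‖w t‖ ^ 2) / 2)) :=
        ((intg_ph_mul_max).div_const 2).add (integrable_ph.mul_const _)
      refine hI.congr (Filter.Eventually.of_forall fun x => ?_)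
      ring
    · rw [hnorm x, Real.norm_eq_abs, Real.norm_eq_abs]
      have h1 : (0:ℝ) ≤ ∫ t in Ioc (0:ℝ) x, ‖w t‖ := integral_nonneg fun t => norm_nonneg _
      have h3 : (0:ℝ) ≤ ph x * ((max x 0 + ∫ t : ℝ, ‖w t‖ ^ 2) / 2) :=
        mul_nonneg (ph_nonneg x) (by positivity)
      rw [abs_of_nonneg (mul_nonneg (ph_nonneg x) h1), abs_of_nonneg h3]
      exact mul_le_mul_of_nonneg_left (intOn_le_max hwm hwi x) (ph_nonneg x)
end swap

section swap2
variable {w : ℝ → ℂ} (hwm : AEStronglyMeasurable w volume)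
  (hwi : Integrable (fun x => ‖w x‖ ^ 2))
include hwm hwi

lemma eq_F1 : ∫ x : ℝ, (ph x : ℂ) * (∫ t in Ioc (0:ℝ) x, w t)
    = ∫ t in Ioi (0:ℝ), w t * (ph t : ℂ) := by
  have hsw := integral_integral_swap
    (f := fun x t => (ph x : ℂ) * (Ioc (0:ℝ) x).indicator w t) (intg_F1 hwm hwi)
  have hL : ∀ x : ℝ, (∫ t : ℝ, (ph x : ℂ) * (Ioc (0:ℝ) x).indicator w t)
      = (ph x : ℂ) * ∫ t in Ioc (0:ℝ) x, w t := by
    intro x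
    rw [integral_const_mul, integral_indicator measurableSet_Ioc]
  have hR : ∀ t : ℝ, (∫ x : ℝ, (ph x : ℂ) * (Ioc (0:ℝ) x).indicator w t)
      = (Ioi (0:ℝ)).indicator (fun s => w s * (ph s : ℂ)) t := by
    intro t
    by_cases ht : 0 < t
    · have hfun : (fun x : ℝ => (ph x : ℂ) * (Ioc (0:ℝ) x).indicator w t)
          = (Ici t).indicator (fun x => (ph x : ℂ) * w t) := by
        funext x
        by_cases hx : t ≤ x
        · rw [Set.indicator_of_mem (show t ∈ Ioc (0:ℝ) x from ⟨ht, hx⟩),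
            Set.indicator_of_mem (show x ∈ Ici t from hx)]
        · rw [Set.indicator_of_notMem (show t ∉ Ioc (0:ℝ) x from fun h => hx h.2), mul_zero,
            Set.indicator_of_notMem (show x ∉ Ici t from hx)]
      have hici : ∫ x in Ici t, (ph x : ℂ) = ((ph t : ℝ) : ℂ) := by
        rw [integral_Ici_eq_integral_Ioi]
        calc ∫ x in Ioi t, ((ph x : ℝ) : ℂ) = ((∫ x in Ioi t, ph x : ℝ) : ℂ) :=
              integral_ofReal (𝕜 := ℂ)
          _ = ((ph t : ℝ) : ℂ) := by rw [tail_Ioi ht.le]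
      rw [hfun, integral_indicator measurableSet_Ici, integral_mul_const, hici,
        Set.indicator_of_mem (show t ∈ Ioi (0:ℝ) from ht), mul_comm]
    · have hfun : (fun x : ℝ => (ph x : ℂ) * (Ioc (0:ℝ) x).indicator w t)
          = fun _ => (0:ℂ) := by
        funext x
        rw [Set.indicator_of_notMem (show t ∉ Ioc (0:ℝ) x from fun h => ht h.1), mul_zero]
      rw [hfun, integral_zero,
        Set.indicator_of_notMem (show t ∉ Ioi (0:ℝ) from fun h => ht h)]
  calc ∫ x : ℝ, (ph x : ℂ) * (∫ t in Ioc (0:ℝ) x, w t)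
      = ∫ x : ℝ, ∫ t : ℝ, (ph x : ℂ) * (Ioc (0:ℝ) x).indicator w t := by
        simp_rw [hL]
    _ = ∫ t : ℝ, ∫ x : ℝ, (ph x : ℂ) * (Ioc (0:ℝ) x).indicator w t := hsw
    _ = ∫ t : ℝ, (Ioi (0:ℝ)).indicator (fun s => w s * (ph s : ℂ)) t := by
        simp_rw [hR]
    _ = ∫ t in Ioi (0:ℝ), w t * (ph t : ℂ) := integral_indicator measurableSet_Ioi

end swap2


section swapneg
variable {w : ℝ → ℂ} (hwm : AEStronglyMeasurable w volume)
  (hwi : Integrable (fun x => ‖w x‖ ^ 2))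
include hwm hwi

noncomputable def F2 (w : ℝ → ℂ) : ℝ × ℝ → ℂ :=
  fun p => (ph p.1 : ℂ) * (Ioc p.1 (0:ℝ)).indicator w p.2

lemma meas_F2 : AEStronglyMeasurable (F2 w) (volume.prod volume) := by
  have hS : MeasurableSet {p : ℝ × ℝ | p.1 < p.2 ∧ p.2 ≤ 0} :=
    (measurableSet_lt measurable_fst measurable_snd).inter
      (measurableSet_le measurable_snd measurable_const)
  have heq : F2 w = fun p : ℝ × ℝ =>
      (ph p.1 : ℂ) * ({p : ℝ × ℝ | p.1 < p.2 ∧ p.2 ≤ 0}.indicator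
        (fun q : ℝ × ℝ => w q.2) p) := by
    funext p
    by_cases h : p.2 ∈ Ioc p.1 (0:ℝ)
    · rw [F2, Set.indicator_of_mem h, Set.indicator_of_mem (by exact h)]
    · rw [F2, Set.indicator_of_notMem h, Set.indicator_of_notMem (by exact h)]
  rw [heq]
  exact ((Complex.continuous_ofReal.comp (ph_cont.comp continuous_fst)).aestronglyMeasurable).mul
    ((hwm.comp_snd).indicator hS)

lemma intOn_le_max2 (x : ℝ) :
    (∫ t in Ioc x (0:ℝ), ‖w t‖) ≤ (max (-x) 0 + ∫ t : ℝ, ‖w t‖ ^ 2) / 2 := by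
  have hb : (∫ t in Ioc x (0:ℝ), ‖w t‖) ≤ ∫ t in Ioc x (0:ℝ), (1 + ‖w t‖ ^ 2) / 2 := by
    refine setIntegral_mono_on (w_intOn hwm hwi x 0).norm
      (((const_intOn x 0).add hwi.restrict).div_const 2)
      measurableSet_Ioc fun t _ => ?_
    nlinarith [norm_nonneg (w t), sq_nonneg (1 - ‖w t‖)]
  have hsplit : (∫ t in Ioc x (0:ℝ), (1 + ‖w t‖ ^ 2) / 2)
      = ((∫ t in Ioc x (0:ℝ), (1:ℝ)) + ∫ t in Ioc x (0:ℝ), ‖w t‖ ^ 2) / 2 := by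
    rw [integral_div, integral_add (const_intOn x 0) hwi.restrict]
  have hone : (∫ t in Ioc x (0:ℝ), (1:ℝ)) ≤ max (-x) 0 := by
    rw [setIntegral_const, smul_eq_mul, mul_one, measureReal_def, Real.volume_Ioc, zero_sub]
    rcases le_or_gt 0 (-x) with h | h
    · rw [ENNReal.toReal_ofReal h]; exact le_max_left _ _
    · rw [ENNReal.ofReal_of_nonpos h.le]; simp [le_max_iff]
  have hM2 : (∫ t in Ioc x (0:ℝ), ‖w t‖ ^ 2) ≤ ∫ t : ℝ, ‖w t‖ ^ 2 :=
    setIntegral_le_integral hwi (Filter.Eventually.of_forall fun t => by positivity)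
  linarith

lemma intg_F2 : Integrable (F2 w) (volume.prod volume) := by
  rw [integrable_prod_iff (meas_F2 hwm hwi)]
  constructor
  · refine Filter.Eventually.of_forall fun x => ?_
    have := ((w_intOn hwm hwi x 0).integrable_indicator measurableSet_Ioc).const_mul
      ((ph x : ℂ))
    exact this.congr (Filter.Eventually.of_forall fun t => rfl)
  · have hnorm : ∀ x : ℝ, (∫ t, ‖F2 w (x, t)‖) = ph x * ∫ t in Ioc x (0:ℝ), ‖w t‖ := by
      intro x
      have hpt : ∀ t : ℝ, ‖F2 w (x, t)‖ = ph x * (Ioc x (0:ℝ)).indicator (fun t => ‖w t‖) t := by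
        intro t
        rw [F2, norm_mul, Complex.norm_real, Real.norm_eq_abs, abs_of_nonneg (ph_nonneg x),
          norm_indicator_eq_indicator_norm]
      simp_rw [hpt]
      rw [integral_const_mul, integral_indicator measurableSet_Ioc]
    have hMnn : (0:ℝ) ≤ ∫ t : ℝ, ‖w t‖ ^ 2 := integral_nonneg fun t => by positivity
    refine Integrable.mono (g := fun x => ph x * ((max (-x) 0 + ∫ t : ℝ, ‖w t‖ ^ 2) / 2)) ?_
      ((meas_F2 hwm hwi).norm.integral_prod_right') (Filter.Eventually.of_forall fun x => ?_)
    · have hmax : Integrable (fun x : ℝ => ph x * max (-x) 0) := by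
        have := intg_ph_mul_max.comp_neg
        refine this.congr (Filter.Eventually.of_forall fun x => ?_)
        simp only [ph_even]
      have hI : Integrable (fun x => ph x * (max (-x) 0) / 2 + ph x * ((∫ t : ℝ, ‖w t‖ ^ 2) / 2)) :=
        (hmax.div_const 2).add (integrable_ph.mul_const _)
      refine hI.congr (Filter.Eventually.of_forall fun x => ?_)
      ring
    · rw [hnorm x, Real.norm_eq_abs, Real.norm_eq_abs]
      have h1 : (0:ℝ) ≤ ∫ t in Ioc x (0:ℝ), ‖w t‖ := integral_nonneg fun t => norm_nonneg _
      have h3 : (0:ℝ) ≤ ph x * ((max (-x) 0 + ∫ t : ℝ, ‖w t‖ ^ 2) / 2) :=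
        mul_nonneg (ph_nonneg x) (by positivity)
      rw [abs_of_nonneg (mul_nonneg (ph_nonneg x) h1), abs_of_nonneg h3]
      exact mul_le_mul_of_nonneg_left (intOn_le_max2 hwm hwi x) (ph_nonneg x)

lemma eq_F2 : ∫ x : ℝ, (ph x : ℂ) * (∫ t in Ioc x (0:ℝ), w t)
    = ∫ t in Iio (0:ℝ), w t * (ph t : ℂ) := by
  have hsw := integral_integral_swap
    (f := fun x t => (ph x : ℂ) * (Ioc x (0:ℝ)).indicator w t) (intg_F2 hwm hwi)
  have hL : ∀ x : ℝ, (∫ t : ℝ, (ph x : ℂ) * (Ioc x (0:ℝ)).indicator w t)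
      = (ph x : ℂ) * ∫ t in Ioc x (0:ℝ), w t := by
    intro x
    rw [integral_const_mul, integral_indicator measurableSet_Ioc]
  have hR : ∀ t : ℝ, (∫ x : ℝ, (ph x : ℂ) * (Ioc x (0:ℝ)).indicator w t)
      = (Iic (0:ℝ)).indicator (fun s => w s * (ph s : ℂ)) t := by
    intro t
    by_cases ht : t ≤ 0
    · have hfun : (fun x : ℝ => (ph x : ℂ) * (Ioc x (0:ℝ)).indicator w t)
          = (Iio t).indicator (fun x => (ph x : ℂ) * w t) := by
        funext x
        by_cases hx : x < t
        · rw [Set.indicator_of_mem (show t ∈ Ioc x (0:ℝ) from ⟨hx, ht⟩),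
            Set.indicator_of_mem (show x ∈ Iio t from hx)]
        · rw [Set.indicator_of_notMem (show t ∉ Ioc x (0:ℝ) from fun h => hx h.1), mul_zero,
            Set.indicator_of_notMem (show x ∉ Iio t from hx)]
      have hiio : ∫ x in Iio t, (ph x : ℂ) = ((ph t : ℝ) : ℂ) := by
        calc ∫ x in Iio t, ((ph x : ℝ) : ℂ) = ((∫ x in Iio t, ph x : ℝ) : ℂ) :=
              integral_ofReal (𝕜 := ℂ)
          _ = ((ph t : ℝ) : ℂ) := by rw [tail_Iio ht]
      rw [hfun, integral_indicator measurableSet_Iio, integral_mul_const, hiio,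
        Set.indicator_of_mem (show t ∈ Iic (0:ℝ) from ht), mul_comm]
    · have hfun : (fun x : ℝ => (ph x : ℂ) * (Ioc x (0:ℝ)).indicator w t)
          = fun _ => (0:ℂ) := by
        funext x
        rw [Set.indicator_of_notMem (show t ∉ Ioc x (0:ℝ) from fun h => ht h.2), mul_zero]
      rw [hfun, integral_zero,
        Set.indicator_of_notMem (show t ∉ Iic (0:ℝ) from fun h => ht h)]
  calc ∫ x : ℝ, (ph x : ℂ) * (∫ t in Ioc x (0:ℝ), w t)
      = ∫ x : ℝ, ∫ t : ℝ, (ph x : ℂ) * (Ioc x (0:ℝ)).indicator w t := by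
        simp_rw [hL]
    _ = ∫ t : ℝ, ∫ x : ℝ, (ph x : ℂ) * (Ioc x (0:ℝ)).indicator w t := hsw
    _ = ∫ t : ℝ, (Iic (0:ℝ)).indicator (fun s => w s * (ph s : ℂ)) t := by
        simp_rw [hR]
    _ = ∫ t in Iic (0:ℝ), w t * (ph t : ℂ) := integral_indicator measurableSet_Iic
    _ = ∫ t in Iio (0:ℝ), w t * (ph t : ℂ) := integral_Iic_eq_integral_Iio

end swapneg

lemma norm_sub_sq' (a b : ℂ) :
    ‖a - b‖ ^ 2 = ‖a‖ ^ 2 + ‖b‖ ^ 2 - 2 * (a * (starRingEnd ℂ) b).re := by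
  have h := Complex.normSq_sub a b
  simpa [Complex.normSq_eq_norm_sq] using h

lemma cross_int {f : ℝ → ℂ} {g : ℝ → ℝ} (hfm : AEStronglyMeasurable f volume)
    (hgm : AEStronglyMeasurable g volume) (hf2 : Integrable (fun x => ‖f x‖ ^ 2))
    (hg2 : Integrable (fun x => g x ^ 2)) : Integrable (fun x => f x * (g x : ℂ)) := by
  have hdom : Integrable (fun x => (‖f x‖ ^ 2 + g x ^ 2) / 2) := (hf2.add hg2).div_const 2
  refine Integrable.mono hdom
    (hfm.mul (Complex.continuous_ofReal.comp_aestronglyMeasurable hgm))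
    (Filter.Eventually.of_forall fun x => ?_)
  rw [norm_mul, Complex.norm_real]
  simp only [Real.norm_eq_abs]
  nlinarith [sq_nonneg (‖f x‖ - |g x|), sq_abs (g x),
    le_abs_self ((‖f x‖ ^ 2 + g x ^ 2) / 2), abs_nonneg (g x), norm_nonneg (f x)]

lemma expand {c : ℂ} (hc1 : ‖c‖ = 1) {f : ℝ → ℂ} {g : ℝ → ℝ}
    (hfm : AEStronglyMeasurable f volume) (hgm : AEStronglyMeasurable g volume)
    (hf2 : Integrable (fun x => ‖f x‖ ^ 2)) (hg2 : Integrable (fun x => g x ^ 2)) :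
    ∫ x : ℝ, ‖f x - c * (g x : ℂ)‖ ^ 2 = (∫ x : ℝ, ‖f x‖ ^ 2) + (∫ x : ℝ, g x ^ 2)
      - 2 * ((starRingEnd ℂ) c * ∫ x : ℝ, f x * (g x : ℂ)).re := by
  have hcr : Integrable (fun x => f x * (g x : ℂ)) := cross_int hfm hgm hf2 hg2
  have hcc : Integrable (fun x => (starRingEnd ℂ) c * (f x * (g x : ℂ))) :=
    hcr.const_mul _
  have hre : Integrable (fun x => ((starRingEnd ℂ) c * (f x * (g x : ℂ))).re) := by
    have := hcc.re
    refine this.congr (Filter.Eventually.of_forall fun x => ?_)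
    simp [RCLike.re_to_complex]
  have hpt : ∀ x : ℝ, ‖f x - c * (g x : ℂ)‖ ^ 2
      = ‖f x‖ ^ 2 + g x ^ 2 - 2 * ((starRingEnd ℂ) c * (f x * (g x : ℂ))).re := by
    intro x
    rw [norm_sub_sq']
    have h1 : ‖c * (g x : ℂ)‖ ^ 2 = g x ^ 2 := by
      rw [norm_mul, hc1, one_mul, Complex.norm_real, Real.norm_eq_abs, sq_abs]
    have h2 : (f x * (starRingEnd ℂ) (c * (g x : ℂ))).re
        = ((starRingEnd ℂ) c * (f x * (g x : ℂ))).re := by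
      rw [map_mul, Complex.conj_ofReal]; ring_nf
    rw [h1, h2]
  simp_rw [hpt]
  have hadd : Integrable (fun x => ‖f x‖ ^ 2 + g x ^ 2) := hf2.add hg2
  rw [integral_sub hadd (hre.const_mul 2), integral_add hf2 hg2, integral_const_mul]
  congr 2
  have hint : ∫ x : ℝ, ((starRingEnd ℂ) c * (f x * (g x : ℂ))).re
      = ((starRingEnd ℂ) c * ∫ x : ℝ, f x * (g x : ℂ)).re := by
    have h3 := integral_re hcc
    rw [integral_const_mul] at h3
    simpa [RCLike.re_to_complex] using h3
  rw [hint]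

lemma key {v v' : ℝ → ℂ} (hm : AEStronglyMeasurable v' volume)
    (hFTC : ∀ x : ℝ, v x = v 0 + ∫ t in (0:ℝ)..x, v' t)
    (hv2 : Integrable (fun x => ‖v x‖ ^ 2)) (hv'2 : Integrable (fun x => ‖v' x‖ ^ 2)) :
    (∫ x : ℝ, v x * (ph x : ℂ)) + ∫ x : ℝ, v' x * (ps x : ℂ)
      = 2 * Real.sqrt 2 * v 0 := by
  have h1 : Integrable (fun x : ℝ => (ph x : ℂ) * ∫ t in Ioc (0:ℝ) x, v' t) := by
    have h := (intg_F1 hm hv'2).integral_prod_left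
    refine h.congr (Filter.Eventually.of_forall fun x => ?_)
    show (∫ t : ℝ, (ph x : ℂ) * (Ioc (0:ℝ) x).indicator v' t) = _
    rw [integral_const_mul, integral_indicator measurableSet_Ioc]
  have h2 : Integrable (fun x : ℝ => (ph x : ℂ) * ∫ t in Ioc x (0:ℝ), v' t) := by
    have h := (intg_F2 hm hv'2).integral_prod_left
    refine h.congr (Filter.Eventually.of_forall fun x => ?_)
    show (∫ t : ℝ, (ph x : ℂ) * (Ioc x (0:ℝ)).indicator v' t) = _
    rw [integral_const_mul, integral_indicator measurableSet_Ioc]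
  have hphC : Integrable (fun x : ℝ => (ph x : ℂ)) := integrable_ph.ofReal
  have hsplit : ∀ x : ℝ, v x * (ph x : ℂ)
      = v 0 * (ph x : ℂ) + ((ph x : ℂ) * ∫ t in Ioc (0:ℝ) x, v' t)
        - ((ph x : ℂ) * ∫ t in Ioc x (0:ℝ), v' t) := by
    intro x
    rw [hFTC x]
    have hiv : (∫ t in (0:ℝ)..x, v' t)
        = (∫ t in Ioc (0:ℝ) x, v' t) - ∫ t in Ioc x (0:ℝ), v' t := rfl
    rw [hiv]; ring
  have hL : ∫ x : ℝ, v x * (ph x : ℂ)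
      = v 0 * ((2 * Real.sqrt 2 : ℝ) : ℂ)
        + (∫ t in Ioi (0:ℝ), v' t * (ph t : ℂ)) - ∫ t in Iio (0:ℝ), v' t * (ph t : ℂ) := by
    calc ∫ x : ℝ, v x * (ph x : ℂ)
        = ∫ x : ℝ, (v 0 * (ph x : ℂ) + ((ph x : ℂ) * ∫ t in Ioc (0:ℝ) x, v' t)
          - ((ph x : ℂ) * ∫ t in Ioc x (0:ℝ), v' t)) := by simp_rw [hsplit]
      _ = (∫ x : ℝ, v 0 * (ph x : ℂ)) + (∫ x : ℝ, (ph x : ℂ) * ∫ t in Ioc (0:ℝ) x, v' t)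
          - ∫ x : ℝ, (ph x : ℂ) * ∫ t in Ioc x (0:ℝ), v' t := by
          have ha : Integrable (fun x : ℝ => v 0 * (ph x : ℂ)
              + ((ph x : ℂ) * ∫ t in Ioc (0:ℝ) x, v' t)) := (hphC.const_mul (v 0)).add h1
          rw [integral_sub ha h2, integral_add (hphC.const_mul (v 0)) h1]
      _ = v 0 * ((2 * Real.sqrt 2 : ℝ) : ℂ)
          + (∫ t in Ioi (0:ℝ), v' t * (ph t : ℂ)) - ∫ t in Iio (0:ℝ), v' t * (ph t : ℂ) := by
          rw [integral_const_mul, eq_F1 hm hv'2, eq_F2 hm hv'2]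
          congr 3
          calc ∫ x : ℝ, (ph x : ℂ) = ((∫ x : ℝ, ph x : ℝ) : ℂ) := integral_ofReal (𝕜 := ℂ)
            _ = ((2 * Real.sqrt 2 : ℝ) : ℂ) := by rw [integral_ph]
  have hvpsi : Integrable (fun x : ℝ => v' x * (ps x : ℂ)) :=
    cross_int hm measurable_ps.aestronglyMeasurable hv'2 integrable_ps_sq
  have hR : ∫ x : ℝ, v' x * (ps x : ℂ)
      = (∫ t in Iio (0:ℝ), v' t * (ph t : ℂ)) - ∫ t in Ioi (0:ℝ), v' t * (ph t : ℂ) := by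
    have hsum := intervalIntegral.integral_Iio_add_Ici (b := (0:ℝ)) (μ := volume)
      hvpsi.integrableOn hvpsi.integrableOn
    have hneg : ∫ x in Iio (0:ℝ), v' x * (ps x : ℂ) = ∫ x in Iio (0:ℝ), v' x * (ph x : ℂ) := by
      refine setIntegral_congr_fun measurableSet_Iio fun x hx => ?_
      have : ps x = ph x := by
        rw [ps_eq, Real.sign_of_neg (show x < 0 from hx)]; ring
      rw [this]
    have hpos : ∫ x in Ici (0:ℝ), v' x * (ps x : ℂ)
        = - ∫ x in Ioi (0:ℝ), v' x * (ph x : ℂ) := by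
      rw [integral_Ici_eq_integral_Ioi, ← integral_neg]
      refine setIntegral_congr_fun measurableSet_Ioi fun x hx => ?_
      have : ps x = -ph x := by
        rw [ps_eq, Real.sign_of_pos (show 0 < x from hx)]; ring
      rw [this]
      push_cast
      ring
    rw [← hsum, hneg, hpos]
    ring
  rw [hL, hR]
  push_cast
  ring

lemma conj_exp_arg {z : ℂ} (hz : z ≠ 0) :
    (starRingEnd ℂ) (Complex.exp ((z.arg : ℂ) * Complex.I)) * z = ((‖z‖ : ℝ) : ℂ) := by
  have habs : (‖z‖ : ℂ) * Complex.exp (z.arg * Complex.I) = z :=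
    Complex.norm_mul_exp_arg_mul_I z
  have hconj : (starRingEnd ℂ) (Complex.exp ((z.arg : ℂ) * Complex.I))
      = Complex.exp (-((z.arg : ℂ) * Complex.I)) := by
    rw [← Complex.exp_conj, map_mul, Complex.conj_ofReal, Complex.conj_I, mul_neg]
  rw [hconj]
  calc Complex.exp (-((z.arg : ℂ) * Complex.I)) * z
      = Complex.exp (-((z.arg : ℂ) * Complex.I))
        * ((‖z‖ : ℂ) * Complex.exp ((z.arg : ℂ) * Complex.I)) := by rw [habs]
    _ = (‖z‖ : ℂ) * (Complex.exp (-((z.arg : ℂ) * Complex.I))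
        * Complex.exp ((z.arg : ℂ) * Complex.I)) := by ring
    _ = (‖z‖ : ℂ) := by
        rw [← Complex.exp_add, neg_add_cancel, Complex.exp_zero, mul_one]


theorem stmt18' : ∀ ε : ℝ, 0 < ε → ∃ δ : ℝ, 0 < δ ∧
    ∀ v v' : ℝ → ℂ,
      (Continuous v ∧ AEStronglyMeasurable v' volume ∧
        (∀ x : ℝ, v x = v 0 + ∫ t in (0:ℝ)..x, v' t) ∧
        Integrable (fun x => ‖v x‖ ^ 2) ∧ Integrable (fun x => ‖v' x‖ ^ 2)) →
      |Real.sqrt (∫ x : ℝ, ‖v' x‖ ^ 2) - Real.sqrt 2| ≤ δ →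
      |Real.sqrt (∫ x : ℝ, ‖v x‖ ^ 2) - Real.sqrt 2| ≤ δ →
      |‖v 0‖ - Real.sqrt 2| ≤ δ →
      ∃ θ : ℝ,
        Real.sqrt
          ((∫ x : ℝ, ‖v x - Complex.exp ((θ:ℂ) * Complex.I) *
              ((Real.sqrt 2 * Real.exp (-|x|) : ℝ) : ℂ)‖ ^ 2) +
           ∫ x : ℝ, ‖v' x - Complex.exp ((θ:ℂ) * Complex.I) *
              ((-(Real.sign x) * Real.sqrt 2 * Real.exp (-|x|) : ℝ) : ℂ)‖ ^ 2) ≤ ε := by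
  intro ε hε
  refine ⟨min 1 (ε ^ 2 / 14), lt_min one_pos (by positivity), ?_⟩
  intro v v' hH hd1 hd2 hd3
  obtain ⟨hc, hm, hFTC, hv2, hv'2⟩ := hH
  set δ := min 1 (ε ^ 2 / 14) with hδdef
  have hδ1 : δ ≤ 1 := min_le_left _ _
  have hδ14 : δ ≤ ε ^ 2 / 14 := min_le_right _ _
  have hδpos : 0 < δ := lt_min one_pos (by positivity)
  have hs2 : Real.sqrt 2 ^ 2 = 2 := Real.sq_sqrt (by norm_num)
  have hs2pos : 0 < Real.sqrt 2 := Real.sqrt_pos.mpr (by norm_num)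
  have hs2gt : 1 < Real.sqrt 2 := by nlinarith
  have hs2lt : Real.sqrt 2 ≤ 3 / 2 := by nlinarith
  have hzne : v 0 ≠ 0 := by
    intro h
    rw [h, norm_zero, abs_le] at hd3
    have := hd3.1
    simp at this
    linarith
  set θ := (v 0).arg with hθ
  set c := Complex.exp ((θ : ℂ) * Complex.I) with hcdef
  have hc1 : ‖c‖ = 1 := by
    rw [hcdef, Complex.norm_exp_ofReal_mul_I]
  refine ⟨θ, ?_⟩
  show Real.sqrt ((∫ x : ℝ, ‖v x - c * (ph x : ℂ)‖ ^ 2)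
    + ∫ x : ℝ, ‖v' x - c * (ps x : ℂ)‖ ^ 2) ≤ ε
  have E1 := expand hc1 hc.aestronglyMeasurable ph_cont.aestronglyMeasurable hv2 integrable_ph_sq
  have E2 := expand hc1 hm measurable_ps.aestronglyMeasurable hv'2 integrable_ps_sq
  set A := ∫ x : ℝ, ‖v x‖ ^ 2 with hA
  set B := ∫ x : ℝ, ‖v' x‖ ^ 2 with hB
  have hcross : ((starRingEnd ℂ) c * ∫ x : ℝ, v x * (ph x : ℂ)).re
      + ((starRingEnd ℂ) c * ∫ x : ℝ, v' x * (ps x : ℂ)).re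
      = 2 * Real.sqrt 2 * ‖v 0‖ := by
    have hsum : (starRingEnd ℂ) c * (∫ x : ℝ, v x * (ph x : ℂ))
        + (starRingEnd ℂ) c * (∫ x : ℝ, v' x * (ps x : ℂ))
        = ((2 * Real.sqrt 2 * ‖v 0‖ : ℝ) : ℂ) := by
      rw [← mul_add, key hm hFTC hv2 hv'2]
      have harg := conj_exp_arg hzne
      calc (starRingEnd ℂ) c * (2 * Real.sqrt 2 * v 0)
          = ((2 * Real.sqrt 2 : ℝ) : ℂ) * ((starRingEnd ℂ) c * v 0) := by push_cast; ring
        _ = ((2 * Real.sqrt 2 : ℝ) : ℂ) * ((‖v 0‖ : ℝ) : ℂ) := by rw [hcdef, hθ, harg]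
        _ = ((2 * Real.sqrt 2 * ‖v 0‖ : ℝ) : ℂ) := by push_cast; ring
    have := congrArg Complex.re hsum
    simpa using this
  have hT : A + 2 - 2 * ((starRingEnd ℂ) c * ∫ x : ℝ, v x * (ph x : ℂ)).re
      + (B + 2 - 2 * ((starRingEnd ℂ) c * ∫ x : ℝ, v' x * (ps x : ℂ)).re)
      ≤ ε ^ 2 := by
    have hAb : A ≤ (Real.sqrt 2 + δ) ^ 2 := by
      have hAnn : 0 ≤ A := integral_nonneg fun x => by positivity
      have h1 : Real.sqrt A ≤ Real.sqrt 2 + δ := by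
        have := (abs_le.mp hd2).2; linarith
      have := Real.sq_sqrt hAnn
      nlinarith [Real.sqrt_nonneg A]
    have hBb : B ≤ (Real.sqrt 2 + δ) ^ 2 := by
      have hBnn : 0 ≤ B := integral_nonneg fun x => by positivity
      have h1 : Real.sqrt B ≤ Real.sqrt 2 + δ := by
        have := (abs_le.mp hd1).2; linarith
      have := Real.sq_sqrt hBnn
      nlinarith [Real.sqrt_nonneg B]
    have hzb : Real.sqrt 2 - δ ≤ ‖v 0‖ := by
      have := (abs_le.mp hd3).1; linarith
    have hre := hcross
    nlinarith [hre]
  calc Real.sqrt ((∫ x : ℝ, ‖v x - c * (ph x : ℂ)‖ ^ 2)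
        + ∫ x : ℝ, ‖v' x - c * (ps x : ℂ)‖ ^ 2)
      ≤ Real.sqrt (ε ^ 2) := by
        apply Real.sqrt_le_sqrt
        rw [E1, E2, integral_ph_sq, integral_ps_sq]
        linarith [hT]
    _ = ε := Real.sqrt_sq hε.le

end Aux

/-- Stability of the ground state `φ₀(x) = √2 e^{-|x|}` (so `‖φ₀‖_{L²} = ‖φ₀'‖_{L²} = √2`
and `φ₀(0) = √2`): if the `L²` norms of `v, v'` and `|v(0)|` are `δ`-close to those of
`φ₀`, then `v` is `ε`-close in `H¹` to `e^{iθ}φ₀` for some phase `θ`. -/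
theorem stmt18 : ∀ ε : ℝ, 0 < ε → ∃ δ : ℝ, 0 < δ ∧
    ∀ v v' : ℝ → ℂ, IsH1 v v' →
      |Real.sqrt (∫ x : ℝ, ‖v' x‖ ^ 2) - Real.sqrt 2| ≤ δ →
      |Real.sqrt (∫ x : ℝ, ‖v x‖ ^ 2) - Real.sqrt 2| ≤ δ →
      |‖v 0‖ - Real.sqrt 2| ≤ δ →
      ∃ θ : ℝ,
        Real.sqrt
          ((∫ x : ℝ, ‖v x - Complex.exp ((θ:ℂ) * Complex.I) *
              ((Real.sqrt 2 * Real.exp (-|x|) : ℝ) : ℂ)‖ ^ 2) +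
           ∫ x : ℝ, ‖v' x - Complex.exp ((θ:ℂ) * Complex.I) *
              ((-(Real.sign x) * Real.sqrt 2 * Real.exp (-|x|) : ℝ) : ℂ)‖ ^ 2) ≤ ε :=
  stmt18'
end
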